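/- arXiv:1602.07531 — 2 statements merged into one kernel-verified Lean document; each statement's English description precedes it below -/
import Mathlib

section
/- Let n ≥ 3, let S ⊆ ℝⁿ be an n-simplex, and let C ⊆ ℝⁿ be a convex body with nonempty interior such that C − C = S − S. Then C is not perfect, i.e., there exists a convex body that is complete with respect to C but not of constant width with respect to C. -/
open Pointwise

/-- Euclidean n-space. -/
abbrev Euc (n : ℕ) : Type := EuclideanSpace ℝ (Fin n)

/-- A convex body: a nonempty compact convex subset of ℝⁿ. -/
def IsBody {n : ℕ} (K : Set (Euc n)) : Prop := Convex ℝ K ∧ IsCompact K ∧ K.Nonempty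

/-- Support function `h(K,u) = sup_{x ∈ K} ⟨u,x⟩`. -/
noncomputable def suppF {n : ℕ} (K : Set (Euc n)) (u : Euc n) : ℝ :=
  sSup ((fun x => (inner ℝ u x : ℝ)) '' K)

/-- The s-breadth `b_s(K,C) = 2 h(K-K,s) / h(C-C,s)` (here `K - K` is the pointwise
(Minkowski) difference body). -/
noncomputable def breadthF {n : ℕ} (K C : Set (Euc n)) (s : Euc n) : ℝ :=
  2 * suppF (K - K) s / suppF (C - C) s

/-- The diameter `D(K,C) = sup_{s ≠ 0} b_s(K,C)`. -/
noncomputable def diamF {n : ℕ} (K C : Set (Euc n)) : ℝ :=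
  sSup {d : ℝ | ∃ s : Euc n, s ≠ 0 ∧ d = breadthF K C s}

/-- The minimal width `w(K,C) = inf_{s ≠ 0} b_s(K,C)`. -/
noncomputable def widthF {n : ℕ} (K C : Set (Euc n)) : ℝ :=
  sInf {d : ℝ | ∃ s : Euc n, s ≠ 0 ∧ d = breadthF K C s}

/-- The circumradius `R(K,C) = inf {λ ≥ 0 : ∃ c, K ⊆ c + λ•C}`. -/
noncomputable def circumF {n : ℕ} (K C : Set (Euc n)) : ℝ :=
  sInf {l : ℝ | 0 ≤ l ∧ ∃ c : Euc n, K ⊆ c +ᵥ l • C}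

/-- The inradius `r(K,C) = sup {λ ≥ 0 : ∃ c, c + λ•C ⊆ K}`. -/
noncomputable def inradF {n : ℕ} (K C : Set (Euc n)) : ℝ :=
  sSup {l : ℝ | 0 ≤ l ∧ ∃ c : Euc n, c +ᵥ l • C ⊆ K}

/-- `K` is (diametrically) complete with respect to `C`. -/
def CompleteWrt {n : ℕ} (K C : Set (Euc n)) : Prop :=
  ∀ K' : Set (Euc n), IsBody K' → K ⊂ K' → diamF K C < diamF K' C

/-- `K` is reduced with respect to `C`. -/
def ReducedWrt {n : ℕ} (K C : Set (Euc n)) : Prop :=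
  ∀ K' : Set (Euc n), IsBody K' → K' ⊂ K → widthF K' C < widthF K C

/-- `K` is of constant width with respect to `C`. -/
def ConstWidthWrt {n : ℕ} (K C : Set (Euc n)) : Prop := widthF K C = diamF K C

/-- `C` is perfect: every complete body is of constant width. -/
def PerfectBody {n : ℕ} (C : Set (Euc n)) : Prop :=
  ∀ K : Set (Euc n), IsBody K → CompleteWrt K C → ConstWidthWrt K C

/-- A polytope: the convex hull of finitely many points. -/
def IsPolytope {n : ℕ} (P : Set (Euc n)) : Prop :=
  ∃ V : Finset (Euc n), P = convexHull ℝ (V : Set (Euc n))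

/-- An n-simplex: the convex hull of n+1 affinely independent points. -/
def IsSimplex {n : ℕ} (S : Set (Euc n)) : Prop :=
  ∃ p : Fin (n + 1) → Euc n, AffineIndependent ℝ p ∧ S = convexHull ℝ (Set.range p)

/-- The Minkowski asymmetry `s(K) = R(-K,K)`. -/
noncomputable def minkAsym {n : ℕ} (K : Set (Euc n)) : ℝ := circumF (-K) K

/-- `K` is Minkowski-centered: `-K ⊆ s(K) • K`. -/
def MinkCentered {n : ℕ} (K : Set (Euc n)) : Prop := -K ⊆ minkAsym K • K

/-- Optimal containment `A ⊆^opt B`. -/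
def SubsetOpt {n : ℕ} (A B : Set (Euc n)) : Prop :=
  A ⊆ B ∧ ∀ ρ : ℝ, ρ < 1 → ∀ c : Euc n, ¬ (A ⊆ c +ᵥ ρ • B)

/-- The face of `P` with outer normal `a`. -/
noncomputable def faceOf {n : ℕ} (P : Set (Euc n)) (a : Euc n) : Set (Euc n) :=
  {x ∈ P | (inner ℝ a x : ℝ) = suppF P a}

/-- `F` is a facet (an (n-1)-dimensional face) of `P`. -/
def IsFacetOf {n : ℕ} (P F : Set (Euc n)) : Prop :=
  ∃ a : Euc n, a ≠ 0 ∧ F = faceOf P a ∧ Module.finrank ℝ (vectorSpan ℝ F) = n - 1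

/-- `Kstar` is a completion of `K` with respect to `C`. -/
def IsCompletionOf {n : ℕ} (Kstar K C : Set (Euc n)) : Prop :=
  IsBody Kstar ∧ K ⊆ Kstar ∧ diamF Kstar C = diamF K C ∧ CompleteWrt Kstar C

namespace SDBNP
open Finset

variable {n : ℕ}

noncomputable def uu (n : ℕ) : ℝ := ((n:ℝ) - 2)/((n:ℝ) - 1)

lemma hn3 (hn : 3 ≤ n) : (3:ℝ) ≤ (n:ℝ) := by exact_mod_cast hn

lemma uu_mul (hn : 3 ≤ n) : uu n * ((n:ℝ) - 1) = (n:ℝ) - 2 := by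
  have h := hn3 hn
  have : (n:ℝ) - 1 ≠ 0 := by linarith
  rw [uu, div_mul_cancel₀ _ this]

lemma uu_nonneg (hn : 3 ≤ n) : 0 ≤ uu n := by
  have h := hn3 hn
  exact div_nonneg (by linarith) (by linarith)

lemma uu_lt_one (hn : 3 ≤ n) : uu n < 1 := by
  have h := hn3 hn
  have h2 := uu_mul hn
  nlinarith

/-- The witness body, in barycentric coordinates. -/
def Kw (b : AffineBasis (Fin (n+1)) ℝ (Euc n)) : Set (Euc n) :=
  {x | b.coord 0 x ≤ uu n ∧ uu n - 1 ≤ b.coord 0 x ∧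
    ∀ k : Fin (n+1), k ≠ 0 → 0 ≤ b.coord k x ∧ 0 ≤ b.coord 0 x + b.coord k x}

lemma coord_linear (b : AffineBasis (Fin (n+1)) ℝ (Euc n)) (i : Fin (n+1)) (x y : Euc n) :
    (b.coord i).linear (x - y) = b.coord i x - b.coord i y := by
  have h := (b.coord i).map_vadd y (x - y)
  simp only [vadd_eq_add, sub_add_cancel] at h
  rw [h]; ring

lemma coord_continuous (b : AffineBasis (Fin (n+1)) ℝ (Euc n)) (i : Fin (n+1)) :
    Continuous (b.coord i) := by
  have : ⇑(b.coord i) = fun x => (b.coord i).linear x + (b.coord i) 0 := by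
    funext x
    have h := (b.coord i).map_vadd (0 : Euc n) x
    simp only [vadd_eq_add, add_zero] at h
    exact h
  rw [this]
  exact ((b.coord i).linear.continuous_of_finiteDimensional).add continuous_const

noncomputable def sVec (φ : Euc n →ₗ[ℝ] ℝ) : Euc n :=
  (InnerProductSpace.toDual ℝ (Euc n)).symm φ.toContinuousLinearMap

lemma inner_sVec (φ : Euc n →ₗ[ℝ] ℝ) (z : Euc n) : (inner ℝ (sVec φ) z : ℝ) = φ z := by
  rw [sVec, InnerProductSpace.toDual_symm_apply]; rfl

noncomputable def φJ (b : AffineBasis (Fin (n+1)) ℝ (Euc n)) (J : Finset (Fin (n+1))) :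
    Euc n →ₗ[ℝ] ℝ := ∑ i ∈ J, (b.coord i).linear

lemma φJ_sub (b : AffineBasis (Fin (n+1)) ℝ (Euc n)) (J : Finset (Fin (n+1))) (x y : Euc n) :
    φJ b J (x - y) = (∑ i ∈ J, b.coord i x) - ∑ i ∈ J, b.coord i y := by
  rw [φJ, LinearMap.sum_apply, ← Finset.sum_sub_distrib]
  exact Finset.sum_congr rfl fun i _ => coord_linear b i x y

lemma suppF_le {A : Set (Euc n)} {s : Euc n} {c : ℝ} (hA : A.Nonempty)
    (h : ∀ z ∈ A, (inner ℝ s z : ℝ) ≤ c) : suppF A s ≤ c :=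
  csSup_le (hA.image _) (by rintro _ ⟨z, hz, rfl⟩; exact h z hz)

lemma le_suppF {A : Set (Euc n)} {s : Euc n} {z : Euc n} (hA : IsCompact A) (hz : z ∈ A) :
    (inner ℝ s z : ℝ) ≤ suppF A s :=
  le_csSup (hA.bddAbove_image ((Continuous.inner continuous_const continuous_id).continuousOn))
    ⟨z, hz, rfl⟩

lemma suppF_mono {A B : Set (Euc n)} {s : Euc n} (hA : A.Nonempty) (hB : IsCompact B)
    (hAB : A ⊆ B) : suppF A s ≤ suppF B s :=
  suppF_le hA (fun z hz => le_suppF hB (hAB hz))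

lemma compact_sub {A : Set (Euc n)} (hA : IsCompact A) : IsCompact (A - A) := by
  have : A - A = (fun q : Euc n × Euc n => q.1 - q.2) '' (A ×ˢ A) := by
    ext z
    simp only [Set.mem_sub, Set.mem_image, Set.mem_prod, Prod.exists]
    tauto
  rw [this]
  exact (hA.prod hA).image (continuous_fst.sub continuous_snd)

/-- Key bound: the breadth of `Kw` in every "subset" direction is at most 1. -/
lemma key_bound (b : AffineBasis (Fin (n+1)) ℝ (Euc n)) {x y : Euc n}
    (hx : x ∈ Kw b) (hy : y ∈ Kw b) (J : Finset (Fin (n+1))) :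
    (∑ i ∈ J, b.coord i x) - ∑ i ∈ J, b.coord i y ≤ 1 := by
  obtain ⟨hx1, hx2, hx3⟩ := hx
  obtain ⟨hy1, hy2, hy3⟩ := hy
  have hsx : ∑ i, b.coord i x = 1 := b.sum_coord_apply_eq_one x
  have hsy : ∑ i, b.coord i y = 1 := b.sum_coord_apply_eq_one y
  have hcx := Finset.sum_add_sum_compl J (fun i => b.coord i x)
  have hcy := Finset.sum_add_sum_compl J (fun i => b.coord i y)
  rw [hsx] at hcx
  rw [hsy] at hcy
  by_cases h0 : (0 : Fin (n+1)) ∈ J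
  · by_cases hJu : J = univ
    · subst hJu
      rw [hsx, hsy]; norm_num
    · -- upper bound for x
      have hupper : ∑ i ∈ J, b.coord i x ≤ 1 := by
        have hnn : (0:ℝ) ≤ ∑ i ∈ Jᶜ, b.coord i x := by
          apply Finset.sum_nonneg
          intro i hi
          have hine : i ≠ 0 := by
            intro h; rw [h] at hi; exact (Finset.mem_compl.mp hi) h0
          exact (hx3 i hine).1
        linarith
      by_cases hJ0 : J = {0}
      · subst hJ0
        simp only [Finset.sum_singleton]
        linarith
      · obtain ⟨k, hkJ, hk0⟩ : ∃ k ∈ J, k ≠ 0 := by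
          by_contra h
          push_neg at h
          apply hJ0
          apply Finset.Subset.antisymm
          · intro a ha
            simp only [Finset.mem_singleton]
            exact h a ha
          · intro a ha
            simp only [Finset.mem_singleton] at ha
            rwa [ha]
        have hlower : (0:ℝ) ≤ ∑ i ∈ J, b.coord i y := by
          have hsub : ({0, k} : Finset (Fin (n+1))) ⊆ J := by
            intro a ha
            rcases Finset.mem_insert.mp ha with h | h
            · rwa [h]
            · rw [Finset.mem_singleton] at h; rwa [h]
          have h1 : ∑ i ∈ ({0, k} : Finset (Fin (n+1))), b.coord i y ≤ ∑ i ∈ J, b.coord i y := by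
            apply Finset.sum_le_sum_of_subset_of_nonneg hsub
            intro i hiJ hins
            have : i ≠ 0 := by
              intro h; apply hins; rw [h]; exact Finset.mem_insert_self _ _
            exact (hy3 i this).1
          have h2 : ∑ i ∈ ({0, k} : Finset (Fin (n+1))), b.coord i y
              = b.coord 0 y + b.coord k y := Finset.sum_pair (Ne.symm hk0)
          have h3 := (hy3 k hk0).2
          linarith
        linarith
  · by_cases hJe : J = univ.erase 0
    · subst hJe
      have hex : ∑ i ∈ univ.erase 0, b.coord i x = 1 - b.coord 0 x := by
        have := Finset.sum_erase_add univ (fun i => b.coord i x) (Finset.mem_univ (0 : Fin (n+1)))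
        rw [hsx] at this
        linarith
      have hey : ∑ i ∈ univ.erase 0, b.coord i y = 1 - b.coord 0 y := by
        have := Finset.sum_erase_add univ (fun i => b.coord i y) (Finset.mem_univ (0 : Fin (n+1)))
        rw [hsy] at this
        linarith
      rw [hex, hey]
      linarith
    · obtain ⟨k, hkJ, hk0⟩ : ∃ k, k ∉ J ∧ k ≠ 0 := by
        by_contra h
        push_neg at h
        apply hJe
        ext a
        simp only [Finset.mem_erase, Finset.mem_univ, and_true]
        constructor
        · intro ha
          intro h0a
          rw [h0a] at ha; exact h0 ha
        · intro ha
          by_contra hnA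
          exact ha (h a hnA)
      have hlower : (0:ℝ) ≤ ∑ i ∈ J, b.coord i y := by
        apply Finset.sum_nonneg
        intro i hi
        have : i ≠ 0 := fun h => h0 (h ▸ hi)
        exact (hy3 i this).1
      have hupper : ∑ i ∈ J, b.coord i x ≤ 1 := by
        have hsub : ({0, k} : Finset (Fin (n+1))) ⊆ Jᶜ := by
          intro a ha
          rcases Finset.mem_insert.mp ha with h | h
          · rw [h]; exact Finset.mem_compl.mpr h0
          · rw [Finset.mem_singleton] at h; rw [h]; exact Finset.mem_compl.mpr hkJ
        have h1 : ∑ i ∈ ({0, k} : Finset (Fin (n+1))), b.coord i x ≤ ∑ i ∈ Jᶜ, b.coord i x := by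
          apply Finset.sum_le_sum_of_subset_of_nonneg hsub
          intro i hiJ hins
          have : i ≠ 0 := by
            intro h; apply hins; rw [h]; exact Finset.mem_insert_self _ _
          exact (hx3 i this).1
        have h2 : ∑ i ∈ ({0, k} : Finset (Fin (n+1))), b.coord i x
            = b.coord 0 x + b.coord k x := Finset.sum_pair (Ne.symm hk0)
        have h3 := (hx3 k hk0).2
        linarith
      linarith

/-- A point from weights. -/
noncomputable def ptw (b : AffineBasis (Fin (n+1)) ℝ (Euc n)) (w : Fin (n+1) → ℝ) : Euc n :=
  ∑ i, w i • b i

lemma ptw_eq_affineCombination (b : AffineBasis (Fin (n+1)) ℝ (Euc n)) {w : Fin (n+1) → ℝ}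
    (hw : ∑ i, w i = 1) : ptw b w = Finset.univ.affineCombination ℝ ⇑b w :=
  (Finset.univ.affineCombination_eq_linear_combination ⇑b w hw).symm

lemma ptw_coord (b : AffineBasis (Fin (n+1)) ℝ (Euc n)) {w : Fin (n+1) → ℝ}
    (hw : ∑ i, w i = 1) (i : Fin (n+1)) : b.coord i (ptw b w) = w i := by
  rw [ptw_eq_affineCombination b hw]
  exact b.coord_apply_combination_of_mem (Finset.mem_univ i) hw

lemma ptw_mem_S (b : AffineBasis (Fin (n+1)) ℝ (Euc n)) {w : Fin (n+1) → ℝ}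
    (hw0 : ∀ i, 0 ≤ w i) (hw : ∑ i, w i = 1) : ptw b w ∈ convexHull ℝ (Set.range ⇑b) := by
  rw [ptw_eq_affineCombination b hw]
  exact affineCombination_mem_convexHull (fun i _ => hw0 i) hw

noncomputable def wA (n : ℕ) : Fin (n+1) → ℝ := fun i => if i = 0 then uu n - 1 else 1 - uu n

noncomputable def wB (n : ℕ) (k : Fin (n+1)) : Fin (n+1) → ℝ :=
  fun i => if i = 0 then uu n else if i = k then 1 - uu n else 0

lemma sum_erase_const (c : ℝ) : ∑ _i ∈ (univ.erase (0 : Fin (n+1))), c = (n:ℝ) * c := by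
  rw [Finset.sum_const, Finset.card_erase_of_mem (Finset.mem_univ _), Finset.card_univ,
    Fintype.card_fin]
  simp [nsmul_eq_mul]

lemma sum_wA (hn : 3 ≤ n) : ∑ i, wA n i = 1 := by
  rw [← Finset.sum_erase_add univ _ (Finset.mem_univ (0 : Fin (n+1)))]
  have h1 : ∑ i ∈ univ.erase (0 : Fin (n+1)), wA n i
      = ∑ _i ∈ univ.erase (0 : Fin (n+1)), (1 - uu n) := by
    apply Finset.sum_congr rfl
    intro i hi
    rw [wA, if_neg (Finset.mem_erase.mp hi).1]
  rw [h1, sum_erase_const, wA, if_pos rfl]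
  have := uu_mul hn
  linear_combination -this

lemma sum_wB (hn : 3 ≤ n) {k : Fin (n+1)} (hk : k ≠ 0) : ∑ i, wB n k i = 1 := by
  rw [← Finset.sum_erase_add univ _ (Finset.mem_univ (0 : Fin (n+1)))]
  have h1 : ∑ i ∈ univ.erase (0 : Fin (n+1)), wB n k i
      = ∑ i ∈ univ.erase (0 : Fin (n+1)), (if i = k then 1 - uu n else 0) := by
    apply Finset.sum_congr rfl
    intro i hi
    rw [wB, if_neg (Finset.mem_erase.mp hi).1]
  rw [h1, Finset.sum_ite_eq' (univ.erase (0 : Fin (n+1))) k,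
    if_pos (Finset.mem_erase.mpr ⟨hk, Finset.mem_univ k⟩), wB, if_pos rfl]
  ring

lemma pA_mem (hn : 3 ≤ n) (b : AffineBasis (Fin (n+1)) ℝ (Euc n)) : ptw b (wA n) ∈ Kw b := by
  have hc := ptw_coord b (sum_wA hn)
  have hu1 := uu_lt_one hn
  refine ⟨?_, ?_, ?_⟩
  · rw [hc 0, wA, if_pos rfl]; linarith
  · rw [hc 0, wA, if_pos rfl]
  · intro k hk
    rw [hc k, hc 0, wA, wA, if_neg hk, if_pos rfl]
    constructor <;> linarith

lemma pB_mem (hn : 3 ≤ n) (b : AffineBasis (Fin (n+1)) ℝ (Euc n)) {k : Fin (n+1)} (hk : k ≠ 0) :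
    ptw b (wB n k) ∈ Kw b := by
  have hc := ptw_coord b (sum_wB hn hk)
  have hu1 := uu_lt_one hn
  have hu0 := uu_nonneg hn
  refine ⟨?_, ?_, ?_⟩
  · rw [hc 0, wB, if_pos rfl]
  · rw [hc 0, wB, if_pos rfl]; linarith
  · intro j hj
    rw [hc j, hc 0, wB, wB, if_neg hj, if_pos rfl]
    by_cases hjk : j = k
    · rw [if_pos hjk]; constructor <;> linarith
    · rw [if_neg hjk]; constructor <;> linarith

lemma pE_mem (hn : 3 ≤ n) (b : AffineBasis (Fin (n+1)) ℝ (Euc n)) {k : Fin (n+1)} (hk : k ≠ 0) :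
    b k ∈ Kw b := by
  have hu1 := uu_lt_one hn
  have hu0 := uu_nonneg hn
  have hco : ∀ i : Fin (n+1), b.coord i (b k) = if i = k then 1 else 0 := fun i => b.coord_apply i k
  refine ⟨?_, ?_, ?_⟩
  · rw [hco 0, if_neg (Ne.symm hk)]; linarith
  · rw [hco 0, if_neg (Ne.symm hk)]; linarith
  · intro j hj
    rw [hco j, hco 0, if_neg (Ne.symm hk)]
    by_cases hjk : j = k
    · rw [if_pos hjk]; constructor <;> linarith
    · rw [if_neg hjk]; constructor <;> linarith

lemma S_coord_nonneg (b : AffineBasis (Fin (n+1)) ℝ (Euc n)) {x : Euc n}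
    (hx : x ∈ convexHull ℝ (Set.range ⇑b)) (i : Fin (n+1)) : 0 ≤ b.coord i x := by
  rw [convexHull_range_eq_exists_affineCombination] at hx
  obtain ⟨s, w, hw0, hw1, rfl⟩ := hx
  by_cases hi : i ∈ s
  · rw [b.coord_apply_combination_of_mem hi hw1]
    exact hw0 i hi
  · rw [b.coord_apply_combination_of_notMem hi hw1]

lemma S_sumJ_bounds (b : AffineBasis (Fin (n+1)) ℝ (Euc n)) {x : Euc n}
    (hx : x ∈ convexHull ℝ (Set.range ⇑b)) (J : Finset (Fin (n+1))) :
    0 ≤ ∑ i ∈ J, b.coord i x ∧ ∑ i ∈ J, b.coord i x ≤ 1 := by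
  constructor
  · exact Finset.sum_nonneg fun i _ => S_coord_nonneg b hx i
  · have h1 : ∑ i ∈ J, b.coord i x ≤ ∑ i, b.coord i x :=
      Finset.sum_le_sum_of_subset_of_nonneg (Finset.subset_univ J)
        (fun i _ _ => S_coord_nonneg b hx i)
    rw [b.sum_coord_apply_eq_one x] at h1
    exact h1

lemma max_neg_eq (t : ℝ) : max (-t) 0 = max t 0 - t := by
  rcases le_total t 0 with h | h
  · rw [max_eq_left (by linarith), max_eq_right h]; ring
  · rw [max_eq_right (by linarith), max_eq_left h]; ring

/-- `Kw - Kw ⊆ S - S`. -/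
lemma KK_sub_SS (hn : 3 ≤ n) (b : AffineBasis (Fin (n+1)) ℝ (Euc n)) {x y : Euc n}
    (hx : x ∈ Kw b) (hy : y ∈ Kw b) :
    x - y ∈ convexHull ℝ (Set.range ⇑b) - convexHull ℝ (Set.range ⇑b) := by
  set δ : Fin (n+1) → ℝ := fun i => b.coord i x - b.coord i y with hδ
  set m : ℝ := ∑ i, max (δ i) 0 with hm
  have hm0 : 0 ≤ m := Finset.sum_nonneg fun i _ => le_max_right _ _
  have hδsum : ∑ i, δ i = 0 := by
    rw [hδ]
    rw [Finset.sum_sub_distrib, b.sum_coord_apply_eq_one x, b.sum_coord_apply_eq_one y]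
    ring
  have hm1 : m ≤ 1 := by
    have hite : ∀ i : Fin (n+1), max (δ i) 0 = if 0 < δ i then δ i else 0 := by
      intro i
      rcases lt_or_ge 0 (δ i) with h | h
      · rw [if_pos h, max_eq_left h.le]
      · rw [if_neg (not_lt.mpr h), max_eq_right h]
    have : m = ∑ i ∈ univ.filter (fun i => 0 < δ i), δ i := by
      rw [hm, Finset.sum_filter]
      exact Finset.sum_congr rfl fun i _ => hite i
    rw [this]
    have h2 := key_bound b hx hy (univ.filter (fun i => 0 < δ i))
    rw [← Finset.sum_sub_distrib] at h2
    exact h2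
  set a : Fin (n+1) → ℝ := fun i => max (δ i) 0 + if i = 0 then 1 - m else 0 with ha
  set c : Fin (n+1) → ℝ := fun i => max (-δ i) 0 + if i = 0 then 1 - m else 0 with hc
  have hsum_ite : ∑ i : Fin (n+1), (if i = 0 then 1 - m else 0) = 1 - m := by
    rw [Finset.sum_ite_eq' univ (0 : Fin (n+1))]
    exact if_pos (Finset.mem_univ _)
  have hsa : ∑ i, a i = 1 := by
    rw [ha]
    rw [Finset.sum_add_distrib, hsum_ite, ← hm]
    ring
  have hsc : ∑ i, c i = 1 := by
    rw [hc]
    rw [Finset.sum_add_distrib, hsum_ite]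
    have : ∑ i : Fin (n+1), max (-δ i) 0 = m := by
      rw [hm]
      rw [Finset.sum_congr rfl fun i _ => max_neg_eq (δ i), Finset.sum_sub_distrib, hδsum]
      ring
    rw [this]
    ring
  have ha0 : ∀ i, 0 ≤ a i := by
    intro i
    simp only [ha]
    have h1 := le_max_right (δ i) 0
    have h2 : (0:ℝ) ≤ if i = 0 then 1 - m else 0 := by
      split <;> linarith
    linarith
  have hc0 : ∀ i, 0 ≤ c i := by
    intro i
    simp only [hc]
    have h1 := le_max_right (-δ i) 0
    have h2 : (0:ℝ) ≤ if i = 0 then 1 - m else 0 := by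
      split <;> linarith
    linarith
  have hac : ∀ i, a i - c i = δ i := by
    intro i
    simp only [ha, hc]
    have h1 := max_neg_eq (δ i)
    linarith
  have hxa : ptw b a ∈ convexHull ℝ (Set.range ⇑b) := ptw_mem_S b ha0 hsa
  have hxc : ptw b c ∈ convexHull ℝ (Set.range ⇑b) := ptw_mem_S b hc0 hsc
  have hkey : ptw b a - ptw b c = x - y := by
    rw [ptw, ptw, ← Finset.sum_sub_distrib]
    have h1 : ∀ i ∈ univ, a i • (b i : Euc n) - c i • b i = δ i • b i := by
      intro i _
      rw [← sub_smul, hac i]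
    rw [Finset.sum_congr rfl h1]
    have hx' : x = ∑ i, b.coord i x • b i := (b.linear_combination_coord_eq_self x).symm
    have hy' : y = ∑ i, b.coord i y • b i := (b.linear_combination_coord_eq_self y).symm
    rw [hδ]
    conv_rhs => rw [hx', hy']
    rw [← Finset.sum_sub_distrib]
    exact Finset.sum_congr rfl fun i _ => by rw [← sub_smul]
  rw [← hkey]
  exact Set.sub_mem_sub hxa hxc

lemma Kw_convex (b : AffineBasis (Fin (n+1)) ℝ (Euc n)) : Convex ℝ (Kw b) := by
  set W : Set (Fin (n+1) → ℝ) := {w | w 0 ≤ uu n ∧ uu n - 1 ≤ w 0 ∧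
    ∀ k : Fin (n+1), k ≠ 0 → 0 ≤ w k ∧ 0 ≤ w 0 + w k} with hW
  have hWc : Convex ℝ W := by
    intro w1 h1 w2 h2 a c ha hc hac
    obtain ⟨h11, h12, h13⟩ := h1
    obtain ⟨h21, h22, h23⟩ := h2
    have happ : ∀ k : Fin (n+1), (a • w1 + c • w2) k = a * w1 k + c * w2 k := fun k => rfl
    have huu : a * uu n + c * uu n = uu n := by rw [← add_mul, hac, one_mul]
    have huu1 : a * (uu n - 1) + c * (uu n - 1) = uu n - 1 := by rw [← add_mul, hac, one_mul]
    refine ⟨?_, ?_, ?_⟩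
    · rw [happ]
      have := add_le_add (mul_le_mul_of_nonneg_left h11 ha) (mul_le_mul_of_nonneg_left h21 hc)
      linarith
    · rw [happ]
      have := add_le_add (mul_le_mul_of_nonneg_left h12 ha) (mul_le_mul_of_nonneg_left h22 hc)
      linarith
    · intro k hk
      rw [happ, happ]
      obtain ⟨h13a, h13b⟩ := h13 k hk
      obtain ⟨h23a, h23b⟩ := h23 k hk
      constructor
      · exact add_nonneg (mul_nonneg ha h13a) (mul_nonneg hc h23a)
      · nlinarith [mul_nonneg ha h13b, mul_nonneg hc h23b]
  have hrep : Kw b = (b.coords) ⁻¹' W := by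
    ext x
    simp only [hW, Kw, Set.mem_setOf_eq, Set.mem_preimage, AffineBasis.coords_apply]
  rw [hrep]
  exact hWc.affine_preimage _

lemma Kw_closed (b : AffineBasis (Fin (n+1)) ℝ (Euc n)) : IsClosed (Kw b) := by
  have hrep : Kw b = ({x | b.coord 0 x ≤ uu n} ∩ {x | uu n - 1 ≤ b.coord 0 x}) ∩
      ⋂ k : Fin (n+1), ⋂ (_ : k ≠ 0),
        ({x | 0 ≤ b.coord k x} ∩ {x | 0 ≤ b.coord 0 x + b.coord k x}) := by
    ext x
    simp only [Kw, Set.mem_setOf_eq, Set.mem_inter_iff, Set.mem_iInter]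
    tauto
  rw [hrep]
  have hc0 := coord_continuous b 0
  refine IsClosed.inter (IsClosed.inter (isClosed_le hc0 continuous_const)
    (isClosed_le continuous_const hc0)) ?_
  refine isClosed_iInter fun k => isClosed_iInter fun _ => IsClosed.inter
    (isClosed_le continuous_const (coord_continuous b k))
    (isClosed_le continuous_const (hc0.add (coord_continuous b k)))

lemma coord_bounds_on_Kw (hn : 3 ≤ n) (b : AffineBasis (Fin (n+1)) ℝ (Euc n)) {x : Euc n}
    (hx : x ∈ Kw b) (i : Fin (n+1)) : -1 ≤ b.coord i x ∧ b.coord i x ≤ 2 := by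
  obtain ⟨hx1, hx2, hx3⟩ := hx
  have hu0 := uu_nonneg hn
  have hu1 := uu_lt_one hn
  by_cases hi : i = 0
  · subst hi; constructor <;> linarith
  · have h0 : 0 ≤ b.coord i x := (hx3 i hi).1
    constructor
    · linarith
    · -- coord i x = 1 - sum over erase i ≥ ...
      have hs := b.sum_coord_apply_eq_one x
      have hsplit := Finset.sum_erase_add univ (fun j => b.coord j x) (Finset.mem_univ i)
      rw [hs] at hsplit
      have hge : b.coord 0 x ≤ ∑ j ∈ univ.erase i, b.coord j x := by
        have hsub : ({0} : Finset (Fin (n+1))) ⊆ univ.erase i := by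
          intro a ha
          rw [Finset.mem_singleton] at ha
          subst ha
          exact Finset.mem_erase.mpr ⟨Ne.symm hi, Finset.mem_univ _⟩
        have := Finset.sum_le_sum_of_subset_of_nonneg hsub
          (fun j _ hj => by
            have hj0 : j ≠ 0 := by
              intro h; apply hj; rw [h]; exact Finset.mem_singleton_self _
            exact (hx3 j hj0).1)
        rwa [Finset.sum_singleton] at this
      linarith

lemma ptw_continuous (b : AffineBasis (Fin (n+1)) ℝ (Euc n)) : Continuous (ptw b) := by
  refine continuous_finset_sum _ fun i _ => ?_
  exact (continuous_apply i).smul continuous_const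

lemma Kw_compact (hn : 3 ≤ n) (b : AffineBasis (Fin (n+1)) ℝ (Euc n)) : IsCompact (Kw b) := by
  have hbox : IsCompact (Set.Icc (fun _ => (-1:ℝ)) (fun _ => (2:ℝ)) : Set (Fin (n+1) → ℝ)) :=
    isCompact_Icc
  have himg : IsCompact (ptw b '' Set.Icc (fun _ => (-1:ℝ)) (fun _ => (2:ℝ))) :=
    hbox.image (ptw_continuous b)
  refine IsCompact.of_isClosed_subset himg (Kw_closed b) ?_
  intro x hx
  refine ⟨fun i => b.coord i x, ?_, ?_⟩
  · rw [Set.mem_Icc]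
    constructor <;> intro i
    · exact (coord_bounds_on_Kw hn b hx i).1
    · exact (coord_bounds_on_Kw hn b hx i).2
  · exact b.linear_combination_coord_eq_self x

def fin1 (hn : 3 ≤ n) : Fin (n+1) := ⟨1, by omega⟩
def fin2 (hn : 3 ≤ n) : Fin (n+1) := ⟨2, by omega⟩
lemma fin1_ne (hn : 3 ≤ n) : fin1 hn ≠ 0 := by simp [fin1, Fin.ext_iff]
lemma fin2_ne (hn : 3 ≤ n) : fin2 hn ≠ 0 := by simp [fin2, Fin.ext_iff]
lemma fin12 (hn : 3 ≤ n) : fin1 hn ≠ fin2 hn := by simp [fin1, fin2, Fin.ext_iff]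

lemma inner_sVec_J (b : AffineBasis (Fin (n+1)) ℝ (Euc n)) (J : Finset (Fin (n+1))) (x y : Euc n) :
    (inner ℝ (sVec (φJ b J)) (x - y) : ℝ) = (∑ i ∈ J, b.coord i x) - ∑ i ∈ J, b.coord i y := by
  rw [inner_sVec, φJ_sub]

lemma sumJ_at_point (b : AffineBasis (Fin (n+1)) ℝ (Euc n)) (J : Finset (Fin (n+1)))
    (k : Fin (n+1)) : ∑ i ∈ J, b.coord i (b k) = if k ∈ J then 1 else 0 := by
  have h : ∀ i ∈ J, b.coord i (b k) = if i = k then (1:ℝ) else 0 := fun i _ => b.coord_apply i k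
  rw [Finset.sum_congr rfl h, Finset.sum_ite_eq' J k (fun _ => (1:ℝ))]

lemma S_nonempty (b : AffineBasis (Fin (n+1)) ℝ (Euc n)) :
    (convexHull ℝ (Set.range ⇑b)).Nonempty :=
  ⟨b 0, subset_convexHull ℝ _ (Set.mem_range_self 0)⟩

lemma S_compact (b : AffineBasis (Fin (n+1)) ℝ (Euc n)) :
    IsCompact (convexHull ℝ (Set.range ⇑b)) :=
  (Set.finite_range ⇑b).isCompact_convexHull ℝ

lemma bk_mem_S (b : AffineBasis (Fin (n+1)) ℝ (Euc n)) (k : Fin (n+1)) :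
    b k ∈ convexHull ℝ (Set.range ⇑b) := subset_convexHull ℝ _ (Set.mem_range_self k)

lemma SS_nonempty (b : AffineBasis (Fin (n+1)) ℝ (Euc n)) :
    (convexHull ℝ (Set.range ⇑b) - convexHull ℝ (Set.range ⇑b)).Nonempty :=
  ⟨b 0 - b 0, Set.sub_mem_sub (bk_mem_S b 0) (bk_mem_S b 0)⟩

lemma suppF_SS_J (b : AffineBasis (Fin (n+1)) ℝ (Euc n)) {J : Finset (Fin (n+1))}
    {i j : Fin (n+1)} (hiJ : i ∈ J) (hjJ : j ∉ J) :
    suppF (convexHull ℝ (Set.range ⇑b) - convexHull ℝ (Set.range ⇑b)) (sVec (φJ b J)) = 1 := by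
  apply le_antisymm
  · apply suppF_le (SS_nonempty b)
    rintro z hz
    rw [Set.mem_sub] at hz
    obtain ⟨x, hx, y, hy, rfl⟩ := hz
    rw [inner_sVec_J]
    have h1 := S_sumJ_bounds b hx J
    have h2 := S_sumJ_bounds b hy J
    linarith
  · have hz : b i - b j ∈ _ := Set.sub_mem_sub (bk_mem_S b i) (bk_mem_S b j)
    have := le_suppF (s := sVec (φJ b J)) (compact_sub (S_compact b)) hz
    rwa [inner_sVec_J, sumJ_at_point, sumJ_at_point, if_pos hiJ, if_neg hjJ, sub_zero] at this

lemma sVec_J_ne (b : AffineBasis (Fin (n+1)) ℝ (Euc n)) {J : Finset (Fin (n+1))}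
    {i j : Fin (n+1)} (hiJ : i ∈ J) (hjJ : j ∉ J) : sVec (φJ b J) ≠ 0 := by
  intro h
  have h1 := inner_sVec_J b J (b i) (b j)
  rw [h, inner_zero_left, sumJ_at_point, sumJ_at_point, if_pos hiJ, if_neg hjJ, sub_zero] at h1
  norm_num at h1

lemma KK_nonempty (hn : 3 ≤ n) (b : AffineBasis (Fin (n+1)) ℝ (Euc n)) :
    (Kw b - Kw b).Nonempty :=
  ⟨b (fin1 hn) - b (fin1 hn),
    Set.sub_mem_sub (pE_mem hn b (fin1_ne hn)) (pE_mem hn b (fin1_ne hn))⟩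

lemma suppF_KK_J0 (hn : 3 ≤ n) (b : AffineBasis (Fin (n+1)) ℝ (Euc n)) :
    suppF (Kw b - Kw b) (sVec (φJ b {0})) = 1 := by
  have h1ne : fin1 hn ≠ 0 := fin1_ne hn
  apply le_antisymm
  · apply suppF_le (KK_nonempty hn b)
    rintro z hz
    rw [Set.mem_sub] at hz
    obtain ⟨x, hx, y, hy, rfl⟩ := hz
    rw [inner_sVec_J, Finset.sum_singleton, Finset.sum_singleton]
    have h1 := hx.1
    have h2 := hy.2.1
    linarith
  · have hz : ptw b (wB n (fin1 hn)) - ptw b (wA n) ∈ Kw b - Kw b :=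
      Set.sub_mem_sub (pB_mem hn b h1ne) (pA_mem hn b)
    have := le_suppF (s := sVec (φJ b {0})) (compact_sub (Kw_compact hn b)) hz
    rw [inner_sVec_J, Finset.sum_singleton, Finset.sum_singleton,
      ptw_coord b (sum_wB hn h1ne), ptw_coord b (sum_wA hn), wB, wA, if_pos rfl, if_pos rfl] at this
    linarith

noncomputable def φg (hn : 3 ≤ n) (b : AffineBasis (Fin (n+1)) ℝ (Euc n)) : Euc n →ₗ[ℝ] ℝ :=
  (b.coord 0).linear - (b.coord (fin1 hn)).linear

lemma inner_sVec_g (hn : 3 ≤ n) (b : AffineBasis (Fin (n+1)) ℝ (Euc n)) (x y : Euc n) :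
    (inner ℝ (sVec (φg hn b)) (x - y) : ℝ)
      = (b.coord 0 x - b.coord (fin1 hn) x) - (b.coord 0 y - b.coord (fin1 hn) y) := by
  rw [inner_sVec, φg, LinearMap.sub_apply, coord_linear, coord_linear]
  ring

lemma g_lower (hn : 3 ≤ n) (b : AffineBasis (Fin (n+1)) ℝ (Euc n)) {x : Euc n} (hx : x ∈ Kw b) :
    -1 ≤ b.coord 0 x - b.coord (fin1 hn) x := by
  obtain ⟨hx1, hx2, hx3⟩ := hx
  set T : Finset (Fin (n+1)) := (univ.erase 0).erase (fin1 hn) with hT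
  have hmem1 : fin1 hn ∈ univ.erase (0 : Fin (n+1)) :=
    Finset.mem_erase.mpr ⟨fin1_ne hn, Finset.mem_univ _⟩
  have hsplit1 := Finset.sum_erase_add univ (fun j => b.coord j x) (Finset.mem_univ (0 : Fin (n+1)))
  have hsplit2 := Finset.sum_erase_add (univ.erase (0:Fin (n+1))) (fun j => b.coord j x) hmem1
  rw [b.sum_coord_apply_eq_one x] at hsplit1
  -- 1 = Σ_T + coord (fin1) + coord 0
  have hkey : b.coord 0 x - b.coord (fin1 hn) x
      = 2 * b.coord 0 x - 1 + ∑ j ∈ T, b.coord j x := by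
    rw [hT]; linarith
  rw [hkey]
  have hTne : ∀ j ∈ T, j ≠ 0 := by
    intro j hj
    rw [hT] at hj
    exact (Finset.mem_erase.mp (Finset.mem_erase.mp hj).2).1
  rcases le_or_gt 0 (b.coord 0 x) with h0 | h0
  · have : (0:ℝ) ≤ ∑ j ∈ T, b.coord j x :=
      Finset.sum_nonneg fun j hj => (hx3 j (hTne j hj)).1
    linarith
  · have hcard : T.card = n - 1 := by
      rw [hT, Finset.card_erase_of_mem hmem1, Finset.card_erase_of_mem (Finset.mem_univ _),
        Finset.card_univ, Fintype.card_fin]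
      omega
    have hbound : ∀ j ∈ T, -(b.coord 0 x) ≤ b.coord j x := by
      intro j hj
      have := (hx3 j (hTne j hj)).2
      linarith
    have hsum : (T.card : ℝ) * (-(b.coord 0 x)) ≤ ∑ j ∈ T, b.coord j x := by
      have := Finset.card_nsmul_le_sum T _ _ hbound
      rwa [nsmul_eq_mul] at this
    have hc2 : (2:ℝ) ≤ (T.card : ℝ) := by
      rw [hcard]
      have : (2:ℕ) ≤ n - 1 := by omega
      exact_mod_cast this
    nlinarith

lemma suppF_KK_g (hn : 3 ≤ n) (b : AffineBasis (Fin (n+1)) ℝ (Euc n)) :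
    suppF (Kw b - Kw b) (sVec (φg hn b)) = 1 + uu n := by
  apply le_antisymm
  · apply suppF_le (KK_nonempty hn b)
    rintro z hz
    rw [Set.mem_sub] at hz
    obtain ⟨x, hx, y, hy, rfl⟩ := hz
    rw [inner_sVec_g]
    have h1 : b.coord 0 x - b.coord (fin1 hn) x ≤ uu n := by
      have := (hx.2.2 (fin1 hn) (fin1_ne hn)).1
      have := hx.1
      linarith
    have h2 := g_lower hn b hy
    linarith
  · have hz : ptw b (wB n (fin2 hn)) - b (fin1 hn) ∈ Kw b - Kw b :=
      Set.sub_mem_sub (pB_mem hn b (fin2_ne hn)) (pE_mem hn b (fin1_ne hn))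
    have h := le_suppF (s := sVec (φg hn b)) (compact_sub (Kw_compact hn b)) hz
    rw [inner_sVec_g] at h
    rw [ptw_coord b (sum_wB hn (fin2_ne hn)), ptw_coord b (sum_wB hn (fin2_ne hn))] at h
    rw [wB, wB, if_pos rfl, if_neg (fin1_ne hn), if_neg (fin12 hn)] at h
    rw [b.coord_apply_ne (fin1_ne hn).symm, b.coord_apply_eq] at h
    linarith

lemma suppF_SS_g (hn : 3 ≤ n) (b : AffineBasis (Fin (n+1)) ℝ (Euc n)) :
    suppF (convexHull ℝ (Set.range ⇑b) - convexHull ℝ (Set.range ⇑b)) (sVec (φg hn b)) = 2 := by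
  apply le_antisymm
  · apply suppF_le (SS_nonempty b)
    rintro z hz
    rw [Set.mem_sub] at hz
    obtain ⟨x, hx, y, hy, rfl⟩ := hz
    rw [inner_sVec_g]
    have h1 := (S_sumJ_bounds b hx {0}).2
    have h2 := S_coord_nonneg b hx (fin1 hn)
    have h3 := S_coord_nonneg b hy 0
    have h4 := (S_sumJ_bounds b hy {fin1 hn}).2
    rw [Finset.sum_singleton] at h1 h4
    linarith
  · have hz : b 0 - b (fin1 hn) ∈ _ := Set.sub_mem_sub (bk_mem_S b 0) (bk_mem_S b (fin1 hn))
    have h := le_suppF (s := sVec (φg hn b)) (compact_sub (S_compact b)) hz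
    rw [inner_sVec_g, b.coord_apply_eq, b.coord_apply_ne (fin1_ne hn),
      b.coord_apply_ne (fin1_ne hn).symm, b.coord_apply_eq] at h
    linarith

lemma sVec_g_ne (hn : 3 ≤ n) (b : AffineBasis (Fin (n+1)) ℝ (Euc n)) : sVec (φg hn b) ≠ 0 := by
  intro h
  have h1 := inner_sVec_g hn b (b 0) (b (fin1 hn))
  rw [h, inner_zero_left, b.coord_apply_eq, b.coord_apply_ne (fin1_ne hn),
    b.coord_apply_ne (fin1_ne hn).symm, b.coord_apply_eq] at h1
  norm_num at h1

lemma CC_lower {C : Set (Euc n)} (hC : IsBody C) (hCint : (interior C).Nonempty) :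
    ∃ ε : ℝ, 0 < ε ∧ ∀ s : Euc n, (ε/2) * ‖s‖ ≤ suppF (C - C) s := by
  obtain ⟨x0, hx0⟩ := hCint
  have hx0C : x0 ∈ C := interior_subset hx0
  obtain ⟨ε, hε, hball⟩ := Metric.mem_nhds_iff.mp (mem_interior_iff_mem_nhds.mp hx0)
  refine ⟨ε, hε, fun s => ?_⟩
  by_cases hs : s = 0
  · subst hs
    rw [norm_zero, mul_zero]
    have h0 : (0 : Euc n) ∈ C - C := by
      rw [← sub_self x0]
      exact Set.sub_mem_sub hx0C hx0C
    have := le_suppF (s := (0 : Euc n)) (compact_sub hC.2.1) h0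
    rwa [inner_zero_left] at this
  · have hns : 0 < ‖s‖ := norm_pos_iff.mpr hs
    set z : Euc n := ((ε/2) * ‖s‖⁻¹) • s with hzdef
    have hz_in : x0 + z ∈ C := by
      apply hball
      rw [Metric.mem_ball, dist_eq_norm, add_sub_cancel_left, hzdef, norm_smul,
        Real.norm_eq_abs, abs_of_pos (by positivity)]
      rw [mul_assoc, inv_mul_cancel₀ (ne_of_gt hns), mul_one]
      linarith
    have hzCC : z ∈ C - C := by
      have heq : z = (x0 + z) - x0 := (add_sub_cancel_left x0 z).symm
      rw [heq]
      exact Set.sub_mem_sub hz_in hx0C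
    have h := le_suppF (s := s) (compact_sub hC.2.1) hzCC
    rw [hzdef, real_inner_smul_right, real_inner_self_eq_norm_sq] at h
    have hval : ε / 2 * ‖s‖⁻¹ * ‖s‖ ^ 2 = ε / 2 * ‖s‖ := by
      rw [pow_two]
      field_simp
    linarith

lemma suppF_KK'_nonneg {K' : Set (Euc n)} (hK' : IsBody K') (s : Euc n) :
    0 ≤ suppF (K' - K') s := by
  obtain ⟨x', hx'⟩ := hK'.2.2
  have h0 : (0 : Euc n) ∈ K' - K' := by
    rw [← sub_self x']
    exact Set.sub_mem_sub hx' hx'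
  have := le_suppF (s := s) (compact_sub hK'.2.1) h0
  rwa [inner_zero_right] at this

lemma breadth_nonneg {C K' : Set (Euc n)} (hC : IsBody C) (hCint : (interior C).Nonempty)
    (hK' : IsBody K') (s : Euc n) : 0 ≤ breadthF K' C s := by
  obtain ⟨ε, hε, hlow⟩ := CC_lower hC hCint
  have h2 : 0 ≤ suppF (C - C) s := le_trans (by positivity) (hlow s)
  exact div_nonneg (by linarith [suppF_KK'_nonneg hK' s]) h2

lemma KK'_nonempty {K' : Set (Euc n)} (hK' : IsBody K') : (K' - K').Nonempty := by
  obtain ⟨x', hx'⟩ := hK'.2.2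
  exact ⟨x' - x', Set.sub_mem_sub hx' hx'⟩

lemma bdd_breadth {C K' : Set (Euc n)} (hC : IsBody C) (hCint : (interior C).Nonempty)
    (hK' : IsBody K') : BddAbove {d : ℝ | ∃ s : Euc n, s ≠ 0 ∧ d = breadthF K' C s} := by
  obtain ⟨ε, hε, hlow⟩ := CC_lower hC hCint
  obtain ⟨R, hR0, hR⟩ : ∃ R : ℝ, 0 ≤ R ∧ ∀ x ∈ K', ‖x‖ ≤ R := by
    obtain ⟨x0', hx0'⟩ := hK'.2.2
    obtain ⟨R, hRub⟩ := (hK'.2.1.image continuous_norm).bddAbove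
    exact ⟨R, le_trans (norm_nonneg x0') (hRub ⟨x0', hx0', rfl⟩),
      fun x hx => hRub ⟨x, hx, rfl⟩⟩
  refine ⟨8 * R / ε, ?_⟩
  rintro d ⟨s, hs, rfl⟩
  have hns : 0 < ‖s‖ := norm_pos_iff.mpr hs
  have h1 : suppF (K' - K') s ≤ 2 * R * ‖s‖ := by
    apply suppF_le (KK'_nonempty hK')
    rintro z hz
    rw [Set.mem_sub] at hz
    obtain ⟨x, hx, y, hy, rfl⟩ := hz
    calc (inner ℝ s (x - y) : ℝ) ≤ ‖s‖ * ‖x - y‖ := real_inner_le_norm s (x - y)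
      _ ≤ ‖s‖ * (‖x‖ + ‖y‖) := by
          have := norm_sub_le x y
          nlinarith
      _ ≤ ‖s‖ * (R + R) := by
          have hxR := hR x hx
          have hyR := hR y hy
          nlinarith
      _ = 2 * R * ‖s‖ := by ring
  have h2 : (ε/2) * ‖s‖ ≤ suppF (C - C) s := hlow s
  have hpos : 0 < (ε/2) * ‖s‖ := by positivity
  calc breadthF K' C s = 2 * suppF (K' - K') s / suppF (C - C) s := rfl
    _ ≤ (2 * (2 * R * ‖s‖)) / ((ε/2) * ‖s‖) := by
        apply div_le_div₀ (by positivity) (by linarith) hpos h2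
    _ = 8 * R / ε := by
        field_simp
        ring

lemma sum_erase_coord (b : AffineBasis (Fin (n+1)) ℝ (Euc n)) (k : Fin (n+1)) (x : Euc n) :
    ∑ i ∈ univ.erase k, b.coord i x = 1 - b.coord k x := by
  have h := Finset.sum_erase_add univ (fun j => b.coord j x) (Finset.mem_univ k)
  rw [b.sum_coord_apply_eq_one x] at h
  linarith

lemma sum_erase2_coord (b : AffineBasis (Fin (n+1)) ℝ (Euc n)) {k : Fin (n+1)} (hk : k ≠ 0)
    (x : Euc n) : ∑ i ∈ (univ.erase 0).erase k, b.coord i x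
      = 1 - b.coord 0 x - b.coord k x := by
  have h1 := sum_erase_coord b 0 x
  have h2 := Finset.sum_erase_add (univ.erase (0 : Fin (n+1))) (fun j => b.coord j x)
    (Finset.mem_erase.mpr ⟨hk, Finset.mem_univ k⟩)
  linarith

lemma diam_Kw_eq (hn : 3 ≤ n) (b : AffineBasis (Fin (n+1)) ℝ (Euc n)) {C : Set (Euc n)}
    (hC : IsBody C) (hCint : (interior C).Nonempty)
    (hCC' : C - C = convexHull ℝ (Set.range ⇑b) - convexHull ℝ (Set.range ⇑b)) :
    diamF (Kw b) C = 2 := by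
  obtain ⟨ε, hε, hlow⟩ := CC_lower hC hCint
  apply le_antisymm
  · apply Real.sSup_le
    · rintro d ⟨s, hs, rfl⟩
      have hns : 0 < ‖s‖ := norm_pos_iff.mpr hs
      have h2pos : 0 < suppF (C - C) s := lt_of_lt_of_le (by positivity) (hlow s)
      have h1 : suppF (Kw b - Kw b) s ≤ suppF (C - C) s := by
        rw [hCC']
        apply suppF_mono (KK_nonempty hn b) (compact_sub (S_compact b))
        intro z hz
        rw [Set.mem_sub] at hz
        obtain ⟨x, hx, y, hy, rfl⟩ := hz
        exact KK_sub_SS hn b hx hy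
      rw [breadthF, div_le_iff₀ h2pos]
      linarith
    · norm_num
  · apply le_csSup (bdd_breadth hC hCint ⟨Kw_convex b, Kw_compact hn b,
      ⟨b (fin1 hn), pE_mem hn b (fin1_ne hn)⟩⟩)
    have h0mem : (0 : Fin (n+1)) ∈ ({0} : Finset (Fin (n+1))) := Finset.mem_singleton_self 0
    have h1nmem : fin1 hn ∉ ({0} : Finset (Fin (n+1))) := by
      rw [Finset.mem_singleton]
      exact fin1_ne hn
    refine ⟨sVec (φJ b {0}), sVec_J_ne b h0mem h1nmem, ?_⟩
    rw [breadthF, hCC', suppF_KK_J0 hn b, suppF_SS_J b h0mem h1nmem]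
    norm_num

lemma width_Kw_le (hn : 3 ≤ n) (b : AffineBasis (Fin (n+1)) ℝ (Euc n)) {C : Set (Euc n)}
    (hC : IsBody C) (hCint : (interior C).Nonempty)
    (hCC' : C - C = convexHull ℝ (Set.range ⇑b) - convexHull ℝ (Set.range ⇑b)) :
    widthF (Kw b) C ≤ 1 + uu n := by
  have hKb : IsBody (Kw b) := ⟨Kw_convex b, Kw_compact hn b,
    ⟨b (fin1 hn), pE_mem hn b (fin1_ne hn)⟩⟩
  apply csInf_le
  · exact ⟨0, by rintro d ⟨s, hs, rfl⟩; exact breadth_nonneg hC hCint hKb s⟩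
  · refine ⟨sVec (φg hn b), sVec_g_ne hn b, ?_⟩
    rw [breadthF, hCC', suppF_KK_g hn b, suppF_SS_g hn b]
    ring

end SDBNP

open SDBNP

/-- if `C - C = S - S` for an n-simplex `S`, `n ≥ 3`, then `C` is not
perfect: some body is complete but not of constant width with respect to `C`. -/
theorem simplex_difference_body_not_perfect {n : ℕ} (hn : 3 ≤ n)
    (S C : Set (Euc n)) (hS : IsSimplex S) (hC : IsBody C)
    (hCint : (interior C).Nonempty) (hCC : C - C = S - S) :
    ∃ K : Set (Euc n), IsBody K ∧ CompleteWrt K C ∧ ¬ ConstWidthWrt K C := by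
  classical
  obtain ⟨p, hp, hSdef⟩ := hS
  have htop : affineSpan ℝ (Set.range p) = ⊤ := by
    rw [hp.affineSpan_eq_top_iff_card_eq_finrank_add_one]
    simp [finrank_euclideanSpace_fin]
  let b : AffineBasis (Fin (n+1)) ℝ (Euc n) := ⟨p, hp, htop⟩
  have hbp : ⇑b = p := rfl
  have hCC' : C - C = convexHull ℝ (Set.range ⇑b) - convexHull ℝ (Set.range ⇑b) := by
    rw [hbp, ← hSdef]; exact hCC
  have hKb : IsBody (Kw b) := ⟨Kw_convex b, Kw_compact hn b,
    ⟨b (fin1 hn), pE_mem hn b (fin1_ne hn)⟩⟩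
  refine ⟨Kw b, hKb, ?_, ?_⟩
  · -- Completeness
    intro K' hK' hsub
    obtain ⟨x, hxK', hxK⟩ := Set.exists_of_ssubset hsub
    rw [diam_Kw_eq hn b hC hCint hCC']
    -- find a violated constraint
    have hmain : ∃ (J : Finset (Fin (n+1))) (i j : Fin (n+1)), i ∈ J ∧ j ∉ J ∧
        ∃ y ∈ Kw b, 1 < (∑ i' ∈ J, b.coord i' x) - ∑ i' ∈ J, b.coord i' y := by
      by_cases c1 : b.coord 0 x ≤ uu n
      · by_cases c2 : uu n - 1 ≤ b.coord 0 x
        · have c3 : ¬ ∀ k : Fin (n+1), k ≠ 0 →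
              0 ≤ b.coord k x ∧ 0 ≤ b.coord 0 x + b.coord k x := fun h => hxK ⟨c1, c2, h⟩
          push_neg at c3
          obtain ⟨k, hk0, hk⟩ := c3
          rcases lt_or_ge (b.coord k x) 0 with h | hck
          · -- coord k x < 0
            refine ⟨Finset.univ.erase k, 0, k,
              Finset.mem_erase.mpr ⟨Ne.symm hk0, Finset.mem_univ _⟩,
              Finset.notMem_erase k _, b k, pE_mem hn b hk0, ?_⟩
            rw [sum_erase_coord b k x, sum_erase_coord b k (b k), b.coord_apply_eq]
            linarith
          · -- coord 0 x + coord k x < 0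
            have h := hk hck
            obtain ⟨i', hi'0, hi'k⟩ : ∃ i' : Fin (n+1), i' ≠ 0 ∧ i' ≠ k := by
              rcases eq_or_ne k (fin1 hn) with hk1 | hk1
              · exact ⟨fin2 hn, fin2_ne hn, by rw [hk1]; exact (fin12 hn).symm⟩
              · exact ⟨fin1 hn, fin1_ne hn, hk1.symm⟩
            refine ⟨(Finset.univ.erase 0).erase k, i', 0,
              Finset.mem_erase.mpr ⟨hi'k, Finset.mem_erase.mpr ⟨hi'0, Finset.mem_univ _⟩⟩,
              fun hmem => (Finset.mem_erase.mp (Finset.mem_erase.mp hmem).2).1 rfl,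
              ptw b (wB n k), pB_mem hn b hk0, ?_⟩
            have e1 : wB n k 0 = uu n := if_pos rfl
            have e2 : wB n k k = 1 - uu n := by simp [wB, hk0]
            rw [sum_erase2_coord b hk0 x, sum_erase2_coord b hk0 (ptw b (wB n k)),
              ptw_coord b (sum_wB hn hk0), ptw_coord b (sum_wB hn hk0), e1, e2]
            linarith
        · -- coord 0 x < uu n - 1
          push_neg at c2
          refine ⟨Finset.univ.erase 0, fin1 hn, 0,
            Finset.mem_erase.mpr ⟨fin1_ne hn, Finset.mem_univ _⟩,
            Finset.notMem_erase 0 _, ptw b (wB n (fin1 hn)), pB_mem hn b (fin1_ne hn), ?_⟩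
          rw [sum_erase_coord b 0 x, sum_erase_coord b 0 (ptw b (wB n (fin1 hn))),
            ptw_coord b (sum_wB hn (fin1_ne hn)), wB, if_pos rfl]
          linarith
      · -- uu n < coord 0 x
        push_neg at c1
        have h1nmem : fin1 hn ∉ ({0} : Finset (Fin (n+1))) := by
          rw [Finset.mem_singleton]; exact fin1_ne hn
        refine ⟨{0}, 0, fin1 hn, Finset.mem_singleton_self 0, h1nmem,
          ptw b (wA n), pA_mem hn b, ?_⟩
        rw [Finset.sum_singleton, Finset.sum_singleton, ptw_coord b (sum_wA hn), wA, if_pos rfl]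
        linarith
    obtain ⟨J, i, j, hiJ, hjJ, y, hyK, hgt⟩ := hmain
    set sv := sVec (φJ b J) with hsv
    have hsne : sv ≠ 0 := sVec_J_ne b hiJ hjJ
    have h1 : 1 < suppF (K' - K') sv := by
      have hle := le_suppF (s := sv) (compact_sub hK'.2.1)
        (Set.sub_mem_sub hxK' (hsub.1 hyK))
      rw [inner_sVec_J] at hle
      linarith
    have h2 : suppF (C - C) sv = 1 := by
      rw [hCC']
      exact suppF_SS_J b hiJ hjJ
    have hbr : breadthF K' C sv = 2 * suppF (K' - K') sv := by
      rw [breadthF, h2, div_one]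
    have hmem : breadthF K' C sv ∈ {d : ℝ | ∃ s : Euc n, s ≠ 0 ∧ d = breadthF K' C s} :=
      ⟨sv, hsne, rfl⟩
    have hfin := le_csSup (bdd_breadth hC hCint hK') hmem
    rw [hbr] at hfin
    calc (2:ℝ) < 2 * suppF (K' - K') sv := by linarith
      _ ≤ diamF K' C := hfin
  · -- Not constant width
    rw [ConstWidthWrt, diam_Kw_eq hn b hC hCint hCC']
    intro hcontra
    have h1 := width_Kw_le hn b hC hCint hCC'
    have h2 := uu_lt_one hn
    rw [hcontra] at h1
    linarith
end

section
/- Let C ⊆ ℝⁿ be a 0-symmetric polytope with nonempty interior and let K ⊆ ℝⁿ be a convex body that is complete and reduced with respect to C (so K is a polytope). If some extreme point v of w(K,C)•C lies in a facet F of K − K such that an outer normal of F is also an outer normal of a facet of K, then K is of constant width with respect to C. -/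
open Pointwise

section helpers
variable {n : ℕ}

lemma bddAbove_img {A : Set (Euc n)} (hA : IsCompact A) (s : Euc n) :
    BddAbove ((fun x => (inner ℝ s x : ℝ)) '' A) :=
  (hA.image (continuous_const.inner continuous_id)).bddAbove

lemma le_suppF {A : Set (Euc n)} (hA : IsCompact A) {x : Euc n} (hx : x ∈ A) (s : Euc n) :
    (inner ℝ s x : ℝ) ≤ suppF A s :=
  le_csSup (bddAbove_img hA s) ⟨x, hx, rfl⟩

lemma suppF_le {A : Set (Euc n)} {M : ℝ} {s : Euc n} (hne : A.Nonempty)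
    (h : ∀ x ∈ A, (inner ℝ s x : ℝ) ≤ M) : suppF A s ≤ M :=
  csSup_le (hne.image _) (by rintro _ ⟨x, hx, rfl⟩; exact h x hx)

lemma suppF_zero_dir {A : Set (Euc n)} (hne : A.Nonempty) : suppF A 0 = 0 := by
  have h1 : suppF A 0 ≤ 0 := suppF_le hne (fun x hx => by simp [inner_zero_left])
  obtain ⟨x, hx⟩ := hne
  have h2 : (0:ℝ) ≤ suppF A 0 := by
    have : (inner ℝ (0 : Euc n) x : ℝ) ≤ suppF A 0 :=
      le_csSup (by refine ⟨0, ?_⟩; rintro _ ⟨y, hy, rfl⟩; simp [inner_zero_left]) ⟨x, hx, rfl⟩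
    simpa [inner_zero_left] using this
  linarith

lemma suppF_singleton (y : Euc n) (s : Euc n) : suppF {y} s = (inner ℝ s y : ℝ) := by
  simp [suppF]

lemma IsCompact.subSet {A B : Set (Euc n)} (hA : IsCompact A) (hB : IsCompact B) :
    IsCompact (A - B) := by
  rw [sub_eq_add_neg]; exact hA.add hB.neg

lemma suppF_sub {A B : Set (Euc n)} (hA : IsCompact A) (hAne : A.Nonempty)
    (hB : IsCompact B) (hBne : B.Nonempty) (s : Euc n) :
    suppF (A - B) s = suppF A s + suppF B (-s) := by
  have hkey : ∀ x ∈ A, ∀ y ∈ B, (inner ℝ s x : ℝ) + inner ℝ (-s) y = inner ℝ s (x - y) := by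
    intro x _ y _
    rw [inner_sub_right, inner_neg_left]; ring
  refine le_antisymm ?_ ?_
  · obtain ⟨x0, hx0⟩ := hAne
    obtain ⟨y0, hy0⟩ := hBne
    refine suppF_le ⟨x0 - y0, Set.sub_mem_sub hx0 hy0⟩ ?_
    rintro z hz
    obtain ⟨x, hx, y, hy, rfl⟩ := Set.mem_sub.1 hz
    rw [← hkey x hx y hy]
    exact add_le_add (le_suppF hA hx s) (le_suppF hB hy (-s))
  · have h1 : suppF A s ≤ suppF (A - B) s - suppF B (-s) := by
      refine csSup_le (hAne.image _) ?_
      rintro _ ⟨x, hx, rfl⟩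
      rw [le_sub_iff_add_le, add_comm, ← le_sub_iff_add_le]
      refine csSup_le (hBne.image _) ?_
      rintro _ ⟨y, hy, rfl⟩
      simp only []
      have := le_suppF (hA.subSet hB) (Set.sub_mem_sub hx hy) s
      have h2 := hkey x hx y hy
      linarith
    linarith

lemma suppF_neg (A : Set (Euc n)) (s : Euc n) : suppF (-A) s = suppF A (-s) := by
  unfold suppF
  congr 1
  ext r
  constructor
  · rintro ⟨x, hx, rfl⟩
    exact ⟨-x, by simpa using hx, by simp [inner_neg_left, inner_neg_right]⟩
  · rintro ⟨x, hx, rfl⟩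
    exact ⟨-x, by simpa using hx, by simp [inner_neg_left, inner_neg_right]⟩

lemma suppF_smul_dir {A : Set (Euc n)} (hA : IsCompact A) (hAne : A.Nonempty)
    {c : ℝ} (hc : 0 < c) (s : Euc n) : suppF A (c • s) = c * suppF A s := by
  refine le_antisymm ?_ ?_
  · refine suppF_le hAne (fun x hx => ?_)
    have : (inner ℝ (c • s) x : ℝ) = c * inner ℝ s x := real_inner_smul_left s x c
    rw [this]
    exact mul_le_mul_of_nonneg_left (le_suppF hA hx s) hc.le
  · have h1 : suppF A s ≤ suppF A (c • s) / c := by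
      refine suppF_le hAne (fun x hx => ?_)
      rw [le_div_iff₀ hc]
      have : (inner ℝ s x : ℝ) * c = inner ℝ (c • s) x := by
        rw [real_inner_smul_left]; ring
      rw [this]
      exact le_suppF hA hx _
    calc c * suppF A s ≤ c * (suppF A (c • s) / c) :=
          mul_le_mul_of_nonneg_left h1 hc.le
    _ = suppF A (c • s) := by field_simp

lemma suppF_union {A B : Set (Euc n)} (hA : IsCompact A) (hAne : A.Nonempty)
    (hB : IsCompact B) (hBne : B.Nonempty) (s : Euc n) :
    suppF (A ∪ B) s = max (suppF A s) (suppF B s) := by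
  unfold suppF
  rw [Set.image_union]
  exact csSup_union (bddAbove_img hA s) (hAne.image _) (bddAbove_img hB s) (hBne.image _)

lemma suppF_hull {A : Set (Euc n)} (hAne : A.Nonempty) (hbdd : ∀ s : Euc n, BddAbove ((fun x => (inner ℝ s x : ℝ)) '' A)) (s : Euc n) :
    suppF (convexHull ℝ A) s = suppF A s := by
  refine le_antisymm ?_ ?_
  · refine csSup_le ((hAne.mono (subset_convexHull ℝ A)).image _) ?_
    rintro _ ⟨x, hx, rfl⟩
    have hconv : Convex ℝ {z : Euc n | (inner ℝ s z : ℝ) ≤ suppF A s} := by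
      refine convex_halfSpace_le ⟨fun a b => inner_add_right _ _ _, fun c a => real_inner_smul_right _ _ _⟩ _
    have hsub : A ⊆ {z : Euc n | (inner ℝ s z : ℝ) ≤ suppF A s} := by
      intro z hz
      exact le_csSup (hbdd s) ⟨z, hz, rfl⟩
    exact convexHull_min hsub hconv hx
  · refine csSup_le (hAne.image _) ?_
    rintro _ ⟨x, hx, rfl⟩
    refine le_csSup ?_ ⟨x, subset_convexHull ℝ A hx, rfl⟩
    -- bddAbove of hull image : bounded by suppF A s
    refine ⟨suppF A s, ?_⟩
    rintro _ ⟨z, hz, rfl⟩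
    have hconv : Convex ℝ {z : Euc n | (inner ℝ s z : ℝ) ≤ suppF A s} := by
      refine convex_halfSpace_le ⟨fun a b => inner_add_right _ _ _, fun c a => real_inner_smul_right _ _ _⟩ _
    have hsub : A ⊆ {z : Euc n | (inner ℝ s z : ℝ) ≤ suppF A s} := by
      intro z hz
      exact le_csSup (hbdd s) ⟨z, hz, rfl⟩
    exact convexHull_min hsub hconv hz

lemma suppF_continuous {A : Set (Euc n)} (hA : IsCompact A) (hAne : A.Nonempty) :
    Continuous (fun s => suppF A s) := by
  obtain ⟨R, hR⟩ := hA.isBounded.subset_closedBall 0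
  have hR0 : 0 ≤ R := by
    obtain ⟨x, hx⟩ := hAne
    have := hR hx
    simp only [Metric.mem_closedBall, dist_zero_right] at this
    linarith [norm_nonneg x]
  have key : ∀ s t : Euc n, suppF A s ≤ suppF A t + R * ‖s - t‖ := by
    intro s t
    refine suppF_le hAne (fun x hx => ?_)
    have h1 : (inner ℝ s x : ℝ) = inner ℝ t x + inner ℝ (s - t) x := by
      rw [inner_sub_left]; ring
    have h2 : (inner ℝ (s - t) x : ℝ) ≤ ‖s - t‖ * ‖x‖ := real_inner_le_norm _ _
    have h3 : ‖x‖ ≤ R := by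
      have := hR hx
      simpa [Metric.mem_closedBall, dist_zero_right] using this
    have h4 : (inner ℝ (s - t) x : ℝ) ≤ R * ‖s - t‖ := by
      calc (inner ℝ (s - t) x : ℝ) ≤ ‖s - t‖ * ‖x‖ := h2
      _ ≤ ‖s - t‖ * R := mul_le_mul_of_nonneg_left h3 (norm_nonneg _)
      _ = R * ‖s - t‖ := by ring
    have h5 := le_suppF hA hx t
    linarith
  have : LipschitzWith (Real.toNNReal R) (fun s => suppF A s) := by
    refine LipschitzWith.of_dist_le_mul (fun s t => ?_)
    rw [Real.dist_eq, abs_le]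
    constructor
    · have := key t s
      have hd : ‖t - s‖ = dist s t := by rw [dist_comm, dist_eq_norm]
      rw [hd] at this
      have hco : (Real.toNNReal R : ℝ) = R := Real.coe_toNNReal R hR0
      rw [hco]
      linarith
    · have := key s t
      have hd : ‖s - t‖ = dist s t := by rw [dist_eq_norm]
      rw [hd] at this
      have hco : (Real.toNNReal R : ℝ) = R := Real.coe_toNNReal R hR0
      rw [hco]
      linarith
  exact this.continuous

end helpers

section helpers2
variable {n : ℕ}

lemma mem_orth_of_const {A : Set (Euc n)} {z : Euc n} {c : ℝ}
    (h : ∀ x ∈ A, (inner ℝ z x : ℝ) = c) : z ∈ (vectorSpan ℝ A)ᗮ := by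
  rw [Submodule.mem_orthogonal]
  intro u hu
  rw [vectorSpan_def] at hu
  induction hu using Submodule.span_induction with
  | mem u hu =>
      obtain ⟨x, hx, y, hy, rfl⟩ := Set.mem_vsub.1 hu
      have hxy : (inner ℝ (x -ᵥ y) z : ℝ) = inner ℝ z x - inner ℝ z y := by
        rw [real_inner_comm]
        simp [inner_sub_right]
      rw [hxy, h x hx, h y hy, sub_self]
  | zero => simp
  | add u v hu hv ihu ihv => rw [inner_add_left, ihu, ihv]; ring
  | smul r u hu ihu => rw [real_inner_smul_left, ihu]; ring

lemma avg_forces {t' : Finset (Euc n)} (hne : t'.Nonempty) {z : Euc n} {M : ℝ}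
    (hle : ∀ x ∈ t', (inner ℝ z x : ℝ) ≤ M)
    (heq : (inner ℝ z (∑ x ∈ t', ((t'.card : ℝ)⁻¹ : ℝ) • x) : ℝ) = M) :
    ∀ x ∈ t', (inner ℝ z x : ℝ) = M := by
  have hcard0 : t'.card ≠ 0 := Finset.card_ne_zero_of_mem hne.choose_spec
  have hcard : (0:ℝ) < (t'.card : ℝ) := by
    exact_mod_cast Nat.pos_of_ne_zero hcard0
  have hsum : (inner ℝ z (∑ x ∈ t', ((t'.card : ℝ)⁻¹ : ℝ) • x) : ℝ)
      = (t'.card : ℝ)⁻¹ * ∑ x ∈ t', (inner ℝ z x : ℝ) := by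
    rw [inner_sum, Finset.mul_sum]
    refine Finset.sum_congr rfl (fun x _ => ?_)
    rw [real_inner_smul_right]
  have h2 : ∑ x ∈ t', (inner ℝ z x : ℝ) = (t'.card : ℝ) * M := by
    rw [hsum] at heq
    have h := congrArg (fun r => (t'.card : ℝ) * r) heq
    simp only [← mul_assoc] at h
    rwa [mul_inv_cancel₀ hcard.ne', one_mul] at h
  have h3 : ∑ x ∈ t', (M - (inner ℝ z x : ℝ)) = 0 := by
    rw [Finset.sum_sub_distrib, Finset.sum_const, nsmul_eq_mul, h2]
    ring
  intro x hx
  have := (Finset.sum_eq_zero_iff_of_nonneg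
    (fun i hi => sub_nonneg.2 (hle i hi))).1 h3 x hx
  linarith

end helpers2


section singletons
variable {n : ℕ}

lemma breadthSet_singleton (C : Set (Euc n)) (x₀ : Euc n) {a : Euc n} (ha : a ≠ 0) :
    {d : ℝ | ∃ s : Euc n, s ≠ 0 ∧ d = breadthF {x₀} C s} = {0} := by
  have hb : ∀ s : Euc n, breadthF ({x₀} : Set (Euc n)) C s = 0 := by
    intro s
    unfold breadthF
    rw [Set.singleton_sub_singleton, sub_self, suppF_singleton, inner_zero_right]
    norm_num
  ext d
  simp only [Set.mem_setOf_eq, Set.mem_singleton_iff]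
  constructor
  · rintro ⟨s, _, rfl⟩; exact hb s
  · rintro rfl; exact ⟨a, ha, (hb a).symm⟩

lemma width_singleton (C : Set (Euc n)) (x₀ : Euc n) {a : Euc n} (ha : a ≠ 0) :
    widthF {x₀} C = 0 := by
  unfold widthF
  rw [breadthSet_singleton C x₀ ha]
  exact csInf_singleton 0

lemma diam_singleton (C : Set (Euc n)) (x₀ : Euc n) {a : Euc n} (ha : a ≠ 0) :
    diamF {x₀} C = 0 := by
  unfold diamF
  rw [breadthSet_singleton C x₀ ha]
  exact csSup_singleton 0

end singletons

set_option maxHeartbeats 3000000 in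
/-- if some extreme point of `w(K,C)•C` lies in a facet of `K - K`
whose outer normal is also an outer normal of a facet of `K`, then the complete and
reduced body `K` is of constant width. -/
theorem extreme_point_in_parallel_facet_constWidth {n : ℕ} (C K : Set (Euc n))
    (hCpoly : IsPolytope C) (hsym : C = -C) (hCint : (interior C).Nonempty)
    (hK : IsBody K) (hcomp : CompleteWrt K C) (hred : ReducedWrt K C)
    (v : Euc n) (hv : v ∈ Set.extremePoints ℝ (widthF K C • C))
    (a : Euc n) (ha : a ≠ 0)
    (hFfacet : IsFacetOf (K - K) (faceOf (K - K) a))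
    (hvF : v ∈ faceOf (K - K) a)
    (haK : IsFacetOf K (faceOf K a)) :
    ConstWidthWrt K C := by
  classical
  obtain ⟨Vfin, hCV⟩ := hCpoly
  have hCcpt : IsCompact C := hCV ▸ Vfin.finite_toSet.isCompact_convexHull ℝ
  have hCne : C.Nonempty := hCint.mono interior_subset
  obtain ⟨hKconv, hKcpt, hKne⟩ := hK
  have hKKcpt : IsCompact (K - K) := hKcpt.subSet hKcpt
  obtain ⟨x₀, hx₀⟩ := id hKne
  have hKKne : (K - K).Nonempty := ⟨x₀ - x₀, Set.sub_mem_sub hx₀ hx₀⟩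
  have hCCcpt : IsCompact (C - C) := hCcpt.subSet hCcpt
  have hCCne : (C - C).Nonempty := by
    obtain ⟨c, hc⟩ := hCne; exact ⟨c - c, Set.sub_mem_sub hc hc⟩
  obtain ⟨c₀, hc₀⟩ := hCint
  obtain ⟨ε, hε, hball⟩ := Metric.mem_nhds_iff.1 (mem_interior_iff_mem_nhds.1 hc₀)
  have hc₀C : c₀ ∈ C := interior_subset hc₀
  have hCC_lb : ∀ s : Euc n, s ≠ 0 → ε / 2 * ‖s‖ ≤ suppF (C - C) s := by
    intro s hs
    have hsn : (0:ℝ) < ‖s‖ := norm_pos_iff.2 hs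
    set x := c₀ + (ε / 2 * ‖s‖⁻¹) • s with hx
    have hxC : x ∈ C := by
      apply hball
      have : dist x c₀ = ‖(ε / 2 * ‖s‖⁻¹) • s‖ := by
        rw [hx, dist_eq_norm, add_sub_cancel_left]
      rw [Metric.mem_ball, this, norm_smul]
      have h1 : ‖(ε / 2 * ‖s‖⁻¹ : ℝ)‖ = ε / 2 * ‖s‖⁻¹ := by
        rw [Real.norm_eq_abs, abs_of_pos]; positivity
      rw [h1]
      have : ε / 2 * ‖s‖⁻¹ * ‖s‖ = ε / 2 := by field_simp
      rw [this]; linarith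
    have hinner : (inner ℝ s (x - c₀) : ℝ) = ε / 2 * ‖s‖ := by
      rw [hx]
      have : c₀ + (ε / 2 * ‖s‖⁻¹) • s - c₀ = (ε / 2 * ‖s‖⁻¹) • s := by abel
      rw [this, real_inner_smul_right, real_inner_self_eq_norm_sq]
      field_simp
    have := le_suppF hCCcpt (Set.sub_mem_sub hxC hc₀C) s
    linarith
  have hCCpos : ∀ s : Euc n, s ≠ 0 → 0 < suppF (C - C) s := by
    intro s hs
    have h1 := hCC_lb s hs
    have hsn : (0:ℝ) < ‖s‖ := norm_pos_iff.2 hs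
    nlinarith
  have hCCtwo : ∀ s : Euc n, suppF (C - C) s = 2 * suppF C s := by
    intro s
    rw [suppF_sub hCcpt hCne hCcpt hCne]
    have h1 : suppF C (-s) = suppF (-C) s := (suppF_neg C s).symm
    rw [h1, ← hsym]; ring
  have hCpos : ∀ s : Euc n, s ≠ 0 → 0 < suppF C s := by
    intro s hs
    have := hCCpos s hs
    rw [hCCtwo] at this
    linarith
  have hCnonneg : ∀ s : Euc n, 0 ≤ suppF C s := by
    intro s
    by_cases hs : s = 0
    · rw [hs, suppF_zero_dir hCne]
    · exact (hCpos s hs).le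
  have hKKnonneg : ∀ s : Euc n, 0 ≤ suppF (K - K) s := by
    intro s
    have := le_suppF hKKcpt (Set.sub_mem_sub hx₀ hx₀) s
    simpa using this
  obtain ⟨R₀, hR₀⟩ := hKKcpt.isBounded.subset_closedBall 0
  set R := max R₀ 0 with hR
  have hRKK : ∀ z ∈ K - K, ‖z‖ ≤ R := by
    intro z hz
    have := hR₀ hz
    simp only [Metric.mem_closedBall, dist_zero_right] at this
    exact this.trans (le_max_left _ _)
  have hKK_ub : ∀ s : Euc n, suppF (K - K) s ≤ R * ‖s‖ := by
    intro s
    refine suppF_le hKKne (fun z hz => ?_)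
    calc (inner ℝ s z : ℝ) ≤ ‖s‖ * ‖z‖ := real_inner_le_norm _ _
    _ ≤ ‖s‖ * R := mul_le_mul_of_nonneg_left (hRKK z hz) (norm_nonneg _)
    _ = R * ‖s‖ := by ring
  have hSne : {d : ℝ | ∃ s : Euc n, s ≠ 0 ∧ d = breadthF K C s}.Nonempty :=
    ⟨breadthF K C a, a, ha, rfl⟩
  have hSnonneg : ∀ d ∈ {d : ℝ | ∃ s : Euc n, s ≠ 0 ∧ d = breadthF K C s}, (0:ℝ) ≤ d := by
    rintro d ⟨s, hs, rfl⟩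
    unfold breadthF
    have := hKKnonneg s
    have := hCCpos s hs
    positivity
  have hSbddB : BddBelow {d : ℝ | ∃ s : Euc n, s ≠ 0 ∧ d = breadthF K C s} := ⟨0, hSnonneg⟩
  have hSbddA : BddAbove {d : ℝ | ∃ s : Euc n, s ≠ 0 ∧ d = breadthF K C s} := by
    refine ⟨4 * R / ε, ?_⟩
    rintro d ⟨s, hs, rfl⟩
    unfold breadthF
    rw [div_le_iff₀ (hCCpos s hs)]
    have h1 := hKK_ub s
    have h2 := hCC_lb s hs
    have hRpos : (0:ℝ) ≤ R := le_max_right _ _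
    have hsn : (0:ℝ) < ‖s‖ := norm_pos_iff.2 hs
    have h3 : 4 * R / ε * (ε / 2 * ‖s‖) = 2 * R * ‖s‖ := by field_simp; ring
    have h4 : 4 * R / ε * (ε / 2 * ‖s‖) ≤ 4 * R / ε * suppF (C - C) s := by
      apply mul_le_mul_of_nonneg_left h2
      positivity
    nlinarith
  have hw_mem : ∀ s : Euc n, s ≠ 0 → widthF K C ≤ breadthF K C s := by
    intro s hs
    exact csInf_le hSbddB ⟨s, hs, rfl⟩
  have hD_mem : ∀ s : Euc n, s ≠ 0 → breadthF K C s ≤ diamF K C := by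
    intro s hs
    exact le_csSup hSbddA ⟨s, hs, rfl⟩
  have hw0 : 0 ≤ widthF K C := le_csInf hSne hSnonneg
  have hD0 : 0 ≤ diamF K C := le_trans (hSnonneg _ ⟨a, ha, rfl⟩) (hD_mem a ha)
  have hle_D : ∀ s : Euc n, suppF (K - K) s ≤ diamF K C * suppF C s := by
    intro s
    by_cases hs : s = 0
    · rw [hs, suppF_zero_dir hKKne, suppF_zero_dir hCne]; simp
    · have h1 := hD_mem s hs
      unfold breadthF at h1
      rw [div_le_iff₀ (hCCpos s hs)] at h1
      rw [hCCtwo] at h1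
      linarith
  have hw_le : ∀ s : Euc n, s ≠ 0 → widthF K C * suppF C s ≤ suppF (K - K) s := by
    intro s hs
    have h1 := hw_mem s hs
    unfold breadthF at h1
    rw [le_div_iff₀ (hCCpos s hs)] at h1
    rw [hCCtwo] at h1
    linarith
  by_cases hsing : ∀ x ∈ K, ∀ y ∈ K, x = y
  · -- K is a singleton
    have hKx : K = {x₀} := by
      apply Set.eq_singleton_iff_unique_mem.2
      exact ⟨hx₀, fun y hy => hsing y hy x₀ hx₀⟩
    unfold ConstWidthWrt
    rw [hKx, width_singleton C x₀ ha, diam_singleton C x₀ ha]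
  · push_neg at hsing
    obtain ⟨x₁, hx₁, x₂, hx₂, hx12⟩ := hsing
    have hwpos : 0 < widthF K C := by
      have hbody : IsBody ({x₁} : Set (Euc n)) :=
        ⟨convex_singleton x₁, isCompact_singleton, ⟨x₁, rfl⟩⟩
      have hss : ({x₁} : Set (Euc n)) ⊂ K := by
        constructor
        · simpa using hx₁
        · intro hsub
          exact hx12 ((hsub hx₂).symm ▸ rfl)
      have := hred {x₁} hbody hss
      rw [width_singleton C x₁ ha] at this
      exact this
    -- facet data
    obtain ⟨b, hb0, hfb, hdim⟩ := haK
    set F := faceOf K a with hFdef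
    have hFne : F.Nonempty := by
      obtain ⟨x, hxK, hmax⟩ := hKcpt.exists_isMaxOn hKne
        ((continuous_const.inner continuous_id).continuousOn
          (s := K) : ContinuousOn (fun y => (inner ℝ a y : ℝ)) K)
      have hgr : suppF K a = (inner ℝ a x : ℝ) :=
        IsGreatest.csSup_eq ⟨⟨x, hxK, rfl⟩, by rintro _ ⟨y, hy, rfl⟩; exact hmax hy⟩
      exact ⟨x, hxK, hgr.symm⟩
    have hFK : F ⊆ K := fun x hx => hx.1
    have hFa : ∀ x ∈ F, (inner ℝ a x : ℝ) = suppF K a := fun x hx => hx.2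
    have hFconv : Convex ℝ F := by
      have h1 : Convex ℝ {x : Euc n | (inner ℝ a x : ℝ) = suppF K a} :=
        convex_hyperplane
          ⟨fun p q => inner_add_right _ _ _, fun c p => real_inner_smul_right _ _ _⟩ _
      have h2 : F = K ∩ {x : Euc n | (inner ℝ a x : ℝ) = suppF K a} := by
        ext x; exact Iff.rfl
      rw [h2]
      exact hKconv.inter h1
    obtain ⟨t, htF, hspan, hindep⟩ := exists_affineIndependent ℝ (Euc n) F
    have htfin : t.Finite := finite_set_of_fin_dim_affineIndependent ℝ hindep
    have hvspan : vectorSpan ℝ t = vectorSpan ℝ F := by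
      rw [← direction_affineSpan, hspan, direction_affineSpan]
    set W := vectorSpan ℝ F with hWdef
    have hWdim : Module.finrank ℝ W = n - 1 := hdim
    have hn1 : 1 ≤ n := by
      rcases Nat.eq_zero_or_pos n with h0 | h1
    
      · exfalso
        subst h0
        haveI : Subsingleton (Euc 0) := (Module.finrank_zero_iff (R := ℝ)).1
          (by rw [finrank_euclideanSpace_fin])
        exact ha (Subsingleton.elim a 0)
      · exact h1
    have hWorth : Module.finrank ℝ (Wᗮ) = 1 := by
      have h := Submodule.finrank_add_finrank_orthogonal W
      rw [finrank_euclideanSpace_fin, hWdim] at h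
      omega
    have haW : a ∈ Wᗮ := by
      have : ∀ x ∈ F, (inner ℝ a x : ℝ) = suppF K a := hFa
      exact mem_orth_of_const this
    have hspanEq : Submodule.span ℝ {a} = Wᗮ := by
      refine Submodule.eq_of_le_of_finrank_eq ?_ ?_
      · rw [Submodule.span_singleton_le_iff_mem]; exact haW
      · rw [finrank_span_singleton ha, hWorth]
    -- the centroid of an affine basis of F
    set t' := htfin.toFinset with ht'def
    have ht'ne : t'.Nonempty := by
      rcases t.eq_empty_or_nonempty with h0 | h1
      · exfalso
        rw [h0] at hspan
        obtain ⟨z, hz⟩ := hFne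
        have h2 : z ∈ affineSpan ℝ (∅ : Set (Euc n)) := hspan ▸ subset_affineSpan ℝ F hz
        rw [show affineSpan ℝ (∅ : Set (Euc n)) = ⊥ from by simp] at h2
        exact AffineSubspace.notMem_bot ℝ (Euc n) z h2
      · obtain ⟨z, hz⟩ := h1
        exact ⟨z, htfin.mem_toFinset.2 hz⟩
    have ht'F : ∀ x ∈ t', x ∈ F := fun x hx => htF (htfin.mem_toFinset.1 hx)
    set xstar := ∑ x ∈ t', ((t'.card : ℝ)⁻¹ : ℝ) • x with hxstardef
    have hcardpos : (0:ℝ) < (t'.card : ℝ) := by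
      exact_mod_cast Finset.card_pos.2 ht'ne
    have hxstarF : xstar ∈ F := by
      refine hFconv.sum_mem (fun i _ => inv_nonneg.2 (Nat.cast_nonneg _)) ?_ (fun i hi => ht'F i hi)
      rw [Finset.sum_const, nsmul_eq_mul, mul_inv_cancel₀ hcardpos.ne']
    have hxstarK : xstar ∈ K := hFK hxstarF
    have hxstara : (inner ℝ a xstar : ℝ) = suppF K a := hFa _ hxstarF
    by_cases hP : ∃ s : Euc n, s ≠ 0 ∧
        (inner ℝ s xstar : ℝ) + suppF K (-s) = diamF K C * suppF C s
    · -- a tight diametral direction exists: it must be parallel to a, giving w = D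
      obtain ⟨s₀, hs₀, heqP⟩ := hP
      have hKKsplit : suppF (K - K) s₀ = suppF K s₀ + suppF K (-s₀) :=
        suppF_sub hKcpt hKne hKcpt hKne s₀
      have h1 : suppF K s₀ + suppF K (-s₀) ≤ diamF K C * suppF C s₀ := by
        rw [← hKKsplit]; exact hle_D s₀
      have h2 : (inner ℝ s₀ xstar : ℝ) ≤ suppF K s₀ := le_suppF hKcpt hxstarK s₀
      have hx0eq : (inner ℝ s₀ xstar : ℝ) = suppF K s₀ := by linarith
      have hKKD : suppF (K - K) s₀ = diamF K C * suppF C s₀ := by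
        rw [hKKsplit]; linarith
      -- all points of t' attain the max in direction s₀
      have halls₀ : ∀ x ∈ t', (inner ℝ s₀ x : ℝ) = suppF K s₀ := by
        refine avg_forces ht'ne (fun x hx => le_suppF hKcpt (hFK (ht'F x hx)) s₀) ?_
        rw [← hxstardef, hx0eq]
      have hallt : ∀ x ∈ t, (inner ℝ s₀ x : ℝ) = suppF K s₀ :=
        fun x hx => halls₀ x (htfin.mem_toFinset.2 hx)
      have hs₀W : s₀ ∈ Wᗮ := by
        have := mem_orth_of_const hallt
        rwa [hvspan] at this
      obtain ⟨lam, hlam⟩ := Submodule.mem_span_singleton.1 (hspanEq ▸ hs₀W)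
      have hlam0 : lam ≠ 0 := by
        rintro rfl
        rw [zero_smul] at hlam
        exact hs₀ hlam.symm
      rcases hlam0.lt_or_gt with hneg | hpos
      · -- λ < 0 forces K degenerate, contradicting w > 0
        exfalso
        have hall : ∀ x ∈ K, (inner ℝ a x : ℝ) = suppF K a := by
          intro x hx
          have hle1 := le_suppF hKcpt hx s₀
          rw [← hx0eq, ← hlam, real_inner_smul_left, real_inner_smul_left] at hle1
          have hge : suppF K a ≤ (inner ℝ a x : ℝ) := by
            rw [← hxstara]
            by_contra hcon
            push_neg at hcon
            have := mul_lt_mul_of_neg_left hcon hneg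
            linarith
          have hle2 := le_suppF hKcpt hx a
          linarith
        have hKK0 : suppF (K - K) a ≤ 0 := by
          refine suppF_le hKKne (fun z hz => ?_)
          obtain ⟨p, hp, q, hq, rfl⟩ := Set.mem_sub.1 hz
          rw [inner_sub_right, hall p hp, hall q hq]
          linarith
        have h5 := hw_le a ha
        have h6 : 0 < widthF K C * suppF C a := mul_pos hwpos (hCpos a ha)
        linarith
      · -- λ > 0 : the direction a itself is diametral
        have hsc : s₀ = lam • a := hlam.symm
        rw [hsc, suppF_smul_dir hKKcpt hKKne hpos, suppF_smul_dir hCcpt hCne hpos] at hKKD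
        have hKKa : suppF (K - K) a = diamF K C * suppF C a := by
          have h3 : lam * suppF (K - K) a = lam * (diamF K C * suppF C a) := by
            rw [hKKD]; ring
          exact mul_left_cancel₀ hpos.ne' h3
        -- from v : the direction a has breadth w
        obtain ⟨c, hcC, hvc⟩ := Set.mem_smul_set.1 hv.1
        have hvKK : (inner ℝ a v : ℝ) = suppF (K - K) a := hvF.2
        have hupper : suppF (K - K) a ≤ widthF K C * suppF C a := by
          rw [← hvKK, ← hvc, real_inner_smul_right]
          exact mul_le_mul_of_nonneg_left (le_suppF hCcpt hcC a) hw0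
        have hlower := hw_le a ha
        have hfin : widthF K C * suppF C a = diamF K C * suppF C a := by linarith
        unfold ConstWidthWrt
        exact mul_right_cancel₀ (hCpos a ha).ne' hfin
    · -- no tight direction at xstar: we can extend K, contradicting completeness
      exfalso
      push_neg at hP
      have hchain : ∀ s : Euc n,
          (inner ℝ s xstar : ℝ) + suppF K (-s) ≤ diamF K C * suppF C s := by
        intro s
        have h1 := hle_D s
        rw [suppF_sub hKcpt hKne hKcpt hKne] at h1
        have h2 := le_suppF hKcpt hxstarK s
        linarith
      have hstrict : ∀ s : Euc n, s ≠ 0 →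
          (inner ℝ s xstar : ℝ) + suppF K (-s) < diamF K C * suppF C s :=
        fun s hs => lt_of_le_of_ne (hchain s) (hP s hs)
      set ψ : Euc n → ℝ :=
        fun s => diamF K C * suppF C s - inner ℝ s xstar - suppF K (-s) with hψdef
      have hψcont : Continuous ψ := by
        refine Continuous.sub (Continuous.sub ?_ ?_) ?_
        · exact continuous_const.mul (suppF_continuous hCcpt hCne)
        · exact Continuous.inner continuous_id continuous_const
        · exact (suppF_continuous hKcpt hKne).comp continuous_neg
      haveI : Nontrivial (Euc n) := nontrivial_of_ne a 0 ha
      have hsph : (Metric.sphere (0 : Euc n) 1).Nonempty :=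
        NormedSpace.sphere_nonempty.2 zero_le_one
      obtain ⟨u₀, hu₀mem, hu₀min⟩ :=
        (isCompact_sphere (0 : Euc n) 1).exists_isMinOn hsph hψcont.continuousOn
      have hu₀norm : ‖u₀‖ = 1 := mem_sphere_zero_iff_norm.1 hu₀mem
      have hu₀ne : u₀ ≠ 0 := by
        intro h
        rw [h, norm_zero] at hu₀norm
        norm_num at hu₀norm
      set m := ψ u₀ with hmdef
      have hm : 0 < m := by
        have := hstrict u₀ hu₀ne
        rw [hmdef, hψdef]
        dsimp only
        linarith
      have hψhom : ∀ s : Euc n, s ≠ 0 → m * ‖s‖ ≤ ψ s := by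
        intro s hs
        have hsn : (0:ℝ) < ‖s‖ := norm_pos_iff.2 hs
        set u := (‖s‖⁻¹ : ℝ) • s with hudef
        have e0 : (‖s‖ : ℝ) • u = s := smul_inv_smul₀ hsn.ne' s
        have hu : u ∈ Metric.sphere (0 : Euc n) 1 :=
          mem_sphere_zero_iff_norm.2 (norm_smul_inv_norm (𝕜 := ℝ) hs)
        have h1 : m ≤ ψ u := hu₀min hu
        have eC : suppF C (‖s‖ • u) = ‖s‖ * suppF C u := suppF_smul_dir hCcpt hCne hsn u
        rw [e0] at eC
        have eK : suppF K (‖s‖ • (-u)) = ‖s‖ * suppF K (-u) :=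
          suppF_smul_dir hKcpt hKne hsn (-u)
        have e0' : (‖s‖ : ℝ) • (-u) = -s := by rw [smul_neg, e0]
        rw [e0'] at eK
        have eI : (inner ℝ ((‖s‖ : ℝ) • u) xstar : ℝ) = ‖s‖ * inner ℝ u xstar :=
          real_inner_smul_left u xstar ‖s‖
        rw [e0] at eI
        have h2 : ψ s = ‖s‖ * ψ u := by
          rw [hψdef]
          dsimp only
          rw [eC, eK, eI]
          ring
        rw [h2]
        calc m * ‖s‖ = ‖s‖ * m := by ring
        _ ≤ ‖s‖ * ψ u := mul_le_mul_of_nonneg_left h1 hsn.le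
      have hna : (0:ℝ) < ‖a‖ := norm_pos_iff.2 ha
      set y := xstar + (m / ‖a‖) • a with hydef
      have hkey : ∀ s : Euc n, (inner ℝ s y : ℝ) + suppF K (-s) ≤ diamF K C * suppF C s := by
        intro s
        by_cases hs : s = 0
        · rw [hs, neg_zero, suppF_zero_dir hKne, suppF_zero_dir hCne, inner_zero_left]
          simp
        · have h1 := hψhom s hs
          have h2 : (inner ℝ s ((m / ‖a‖) • a) : ℝ) ≤ m * ‖s‖ := by
            rw [real_inner_smul_right]
            have h3 := real_inner_le_norm s a
            calc m / ‖a‖ * (inner ℝ s a : ℝ) ≤ m / ‖a‖ * (‖s‖ * ‖a‖) :=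
              mul_le_mul_of_nonneg_left h3 (by positivity)
            _ = m * ‖s‖ := by field_simp
          have h4 : (inner ℝ s y : ℝ) = inner ℝ s xstar + inner ℝ s ((m / ‖a‖) • a) := by
            rw [hydef, inner_add_right]
          rw [hψdef] at h1
          dsimp only at h1
          rw [h4]
          set A := (inner ℝ s xstar : ℝ) with hA
          set B := (inner ℝ s ((m / ‖a‖) • a) : ℝ) with hB
          set SS := suppF K (-s) with hSS
          set DD := diamF K C * suppF C s with hDD
          linarith
      have hyK : y ∉ K := by
        intro hyk
        have h1 := le_suppF hKcpt hyk a
        have h2 : (inner ℝ a y : ℝ) = suppF K a + m / ‖a‖ * ‖a‖ ^ 2 := by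
          rw [hydef, inner_add_right, hxstara, real_inner_smul_right,
            real_inner_self_eq_norm_sq]
        have h3 : (0:ℝ) < m / ‖a‖ * ‖a‖ ^ 2 := by positivity
        linarith
      set K' := convexHull ℝ (insert y K) with hK'def
      have hK'conv : Convex ℝ K' := convex_convexHull ℝ _
      have hKsubK' : K ⊆ K' := (Set.subset_insert y K).trans (subset_convexHull ℝ _)
      have hK'ne : K'.Nonempty := hKne.mono hKsubK'
      have hK'eq : K' = (fun p : ℝ × Euc n => (1 - p.1) • y + p.1 • p.2) ''
          (Set.Icc (0:ℝ) 1 ×ˢ K) := by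
        rw [hK'def, convexHull_insert hKne, hKconv.convexHull_eq]
        ext z
        simp only [mem_convexJoin, Set.mem_singleton_iff, Set.mem_image, Set.mem_prod,
          Set.mem_Icc, exists_eq_left]
        constructor
        · rintro ⟨q, hq, hz⟩
          rw [segment_eq_image] at hz
          obtain ⟨θ, hθ, rfl⟩ := hz
          exact ⟨(θ, q), ⟨hθ, hq⟩, rfl⟩
        · rintro ⟨⟨θ, q⟩, ⟨hθ, hq⟩, rfl⟩
          refine ⟨q, hq, ?_⟩
          rw [segment_eq_image]
          exact ⟨θ, hθ, rfl⟩
      have hK'cpt : IsCompact K' := by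
        rw [hK'eq]
        refine (isCompact_Icc.prod hKcpt).image ?_
        exact ((continuous_const.sub continuous_fst).smul continuous_const).add
          (continuous_fst.smul continuous_snd)
      have hssub : K ⊂ K' :=
        ⟨hKsubK', fun hsub => hyK (hsub (subset_convexHull ℝ _ (Set.mem_insert y K)))⟩
      have hinscpt : IsCompact (insert y K) := by
        rw [← Set.singleton_union]
        exact isCompact_singleton.union hKcpt
      have hK's : ∀ s : Euc n, suppF K' s = max (inner ℝ s y : ℝ) (suppF K s) := by
        intro s
        rw [hK'def, suppF_hull ⟨y, Set.mem_insert y K⟩ (fun s => bddAbove_img hinscpt s) s,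
          ← Set.singleton_union,
          suppF_union isCompact_singleton ⟨y, rfl⟩ hKcpt hKne, suppF_singleton]
      have hbound : ∀ s : Euc n, suppF (K' - K') s ≤ diamF K C * suppF C s := by
        intro s
        rw [suppF_sub hK'cpt hK'ne hK'cpt hK'ne s, hK's s, hK's (-s)]
        have hCneg : suppF C (-s) = suppF C s := by rw [← suppF_neg, ← hsym]
        have case1 : suppF K s + suppF K (-s) ≤ diamF K C * suppF C s := by
          have := hle_D s
          rw [suppF_sub hKcpt hKne hKcpt hKne] at this
          exact this
        have case2 : (inner ℝ s y : ℝ) + suppF K (-s) ≤ diamF K C * suppF C s := hkey s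
        have case3 : suppF K s + (inner ℝ (-s) y : ℝ) ≤ diamF K C * suppF C s := by
          have := hkey (-s)
          rw [neg_neg, hCneg] at this
          linarith
        have case4 : (inner ℝ s y : ℝ) + (inner ℝ (-s) y : ℝ) ≤ diamF K C * suppF C s := by
          have hneg : (inner ℝ (-s) y : ℝ) = -inner ℝ s y := by
            rw [inner_neg_left]
          have hnn : 0 ≤ diamF K C * suppF C s := mul_nonneg hD0 (hCnonneg s)
          rw [hneg]
          linarith
        rcases max_choice (inner ℝ s y : ℝ) (suppF K s) with h1 | h1 <;>
          rcases max_choice (inner ℝ (-s) y : ℝ) (suppF K (-s)) with h2 | h2 <;>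
          rw [h1, h2] <;> linarith
      have hdiamle : diamF K' C ≤ diamF K C := by
        refine csSup_le ⟨breadthF K' C a, a, ha, rfl⟩ ?_
        rintro d ⟨s, hs, rfl⟩
        unfold breadthF
        rw [div_le_iff₀ (hCCpos s hs), hCCtwo s]
        have := hbound s
        linarith
      have hlt := hcomp K' ⟨hK'conv, hK'cpt, hK'ne⟩ hssub
      linarith
end
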